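/- arXiv:2601.08678 — 2 statements merged into one kernel-verified Lean document; each statement's English description precedes it below -/
import Mathlib

section
/- Let D = (P,𝓑) be a symmetric 2-(v,k,λ) design with λ > 1 and let G be a flag-transitive automorphism group of D. Suppose that for a block B the setwise stabilizer G_B is isomorphic to the dihedral group D_{2n} with n ≥ 3. Then there exists a point x ∈ P∖B such that G_B = G_x. Moreover, if N is a cyclic subgroup of G_B of order n, then the number of points of P fixed by every element of N equals 1 or 3. -/
open scoped Pointwise

/-- A group action is primitive if it is transitive and every block is trivial
(this is the usual notion of a primitive permutation group). -/
def IsPrimitiveAction (G X : Type*) [Group G] [MulAction G X] : Prop :=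
  MulAction.IsPretransitive G X ∧
    ∀ B : Set X, MulAction.IsBlock G B → B.Subsingleton ∨ B = Set.univ

variable {P : Type*} [Fintype P] [DecidableEq P]

/-- `𝓑` is the block set of a (non-trivial) 2-design with parameters `(v, k, lam)`
on the point set `P`. -/
structure IsDesign (𝓑 : Finset (Finset P)) (v k lam : ℕ) : Prop where
  card_points : Fintype.card P = v
  blocks_card : ∀ B ∈ 𝓑, B.card = k
  two_lt_k : 2 < k
  k_lt_v : k < v - 1
  lam_pos : 0 < lam
  pair_blocks : ∀ x y : P, x ≠ y → (𝓑.filter fun B => x ∈ B ∧ y ∈ B).card = lam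

/-- `G` is an automorphism group of the design with block set `𝓑`:
every element of `G` maps blocks to blocks. -/
def IsAutGroup (G : Subgroup (Equiv.Perm P)) (𝓑 : Finset (Finset P)) : Prop :=
  ∀ g ∈ G, ∀ B ∈ 𝓑, g • B ∈ 𝓑

/-- `G` acts transitively on the flags of the design with block set `𝓑`. -/
def IsFlagTransitive (G : Subgroup (Equiv.Perm P)) (𝓑 : Finset (Finset P)) : Prop :=
  ∀ B₁ ∈ 𝓑, ∀ B₂ ∈ 𝓑, ∀ x₁ ∈ B₁, ∀ x₂ ∈ B₂, ∃ g ∈ G, g • x₁ = x₂ ∧ g • B₁ = B₂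

/-- `G` acts transitively on the blocks of the design with block set `𝓑`. -/
def IsBlockTransitive (G : Subgroup (Equiv.Perm P)) (𝓑 : Finset (Finset P)) : Prop :=
  ∀ B₁ ∈ 𝓑, ∀ B₂ ∈ 𝓑, ∃ g ∈ G, g • B₁ = B₂

section AuxDesign
variable {𝓑 : Finset (Finset P)} {v k lam : ℕ}

lemma deg_mul (hD : IsDesign 𝓑 v k lam) (x : P) :
    (𝓑.filter (fun C => x ∈ C)).card * (k - 1) = lam * (v - 1) := by
  have h1 : ∀ C ∈ 𝓑.filter (fun C => x ∈ C), (C.erase x).card = k - 1 := by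
    intro C hC
    rw [Finset.mem_filter] at hC
    rw [Finset.card_erase_of_mem hC.2, hD.blocks_card C hC.1]
  have h2 : ∑ C ∈ 𝓑.filter (fun C => x ∈ C), (C.erase x).card
      = (𝓑.filter (fun C => x ∈ C)).card * (k-1) := by
    rw [Finset.sum_congr rfl h1, Finset.sum_const, smul_eq_mul]
  have h3 : ∀ C ∈ 𝓑.filter (fun C => x ∈ C),
      (C.erase x).card = ∑ y ∈ Finset.univ.erase x, (if y ∈ C then 1 else 0) := by
    intro C hC
    rw [← Finset.card_filter]
    congr 1
    ext y
    simp [Finset.mem_erase, and_comm]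
  have h4 : ∑ C ∈ 𝓑.filter (fun C => x ∈ C), (C.erase x).card
      = ∑ y ∈ Finset.univ.erase x, (𝓑.filter (fun C => x ∈ C ∧ y ∈ C)).card := by
    rw [Finset.sum_congr rfl h3, Finset.sum_comm]
    refine Finset.sum_congr rfl (fun y hy => ?_)
    rw [← Finset.card_filter, Finset.filter_filter]
  have h5 : ∑ y ∈ Finset.univ.erase x, (𝓑.filter (fun C => x ∈ C ∧ y ∈ C)).card
      = (v-1) * lam := by
    rw [Finset.sum_congr rfl (fun y hy => ?_), Finset.sum_const, smul_eq_mul,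
      Finset.card_erase_of_mem (Finset.mem_univ x), Finset.card_univ, hD.card_points]
    have hyx : y ≠ x := (Finset.mem_erase.mp hy).1
    have := hD.pair_blocks x y hyx.symm
    simpa [and_comm] using this
  rw [← h2, h4, h5, mul_comm]

lemma sum_deg (hD : IsDesign 𝓑 v k lam) (hsym : 𝓑.card = v) :
    ∑ x : P, (𝓑.filter (fun C => x ∈ C)).card = v * k := by
  have : ∀ x : P, (𝓑.filter (fun C => x ∈ C)).card = ∑ C ∈ 𝓑, (if x ∈ C then 1 else 0) := by
    intro x
    rw [← Finset.card_filter]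
  rw [Finset.sum_congr rfl (fun x _ => this x), Finset.sum_comm]
  have : ∀ C ∈ 𝓑, ∑ x : P, (if x ∈ C then 1 else 0) = k := by
    intro C hC
    rw [← Finset.card_filter, Finset.filter_mem_eq_inter, Finset.univ_inter, hD.blocks_card C hC]
  rw [Finset.sum_congr rfl this, Finset.sum_const, smul_eq_mul, hsym]

lemma lam_eq (hD : IsDesign 𝓑 v k lam) (hsym : 𝓑.card = v) : lam * (v - 1) = k * (k - 1) := by
  have h := sum_deg hD hsym
  have h2 : (∑ x : P, (𝓑.filter (fun C => x ∈ C)).card) * (k-1) = v * (lam * (v-1)) := by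
    rw [Finset.sum_mul, Finset.sum_congr rfl (fun x _ => deg_mul hD x), Finset.sum_const,
      smul_eq_mul, Finset.card_univ, hD.card_points]
  rw [h] at h2
  have hv : 0 < v := by have := hD.k_lt_v; omega
  have : v * (k * (k-1)) = v * (lam * (v-1)) := by rw [← h2]; ring
  exact (Nat.eq_of_mul_eq_mul_left hv this.symm)

lemma deg_eq (hD : IsDesign 𝓑 v k lam) (hsym : 𝓑.card = v) (x : P) :
    (𝓑.filter (fun C => x ∈ C)).card = k := by
  have h := deg_mul hD x
  rw [lam_eq hD hsym] at h
  have hk : 0 < k - 1 := by have := hD.two_lt_k; omega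
  exact Nat.eq_of_mul_eq_mul_right hk h

lemma lam_lt_k (hD : IsDesign 𝓑 v k lam) (hsym : 𝓑.card = v) : lam < k := by
  have h := lam_eq hD hsym
  have h2 := hD.k_lt_v
  have h3 := hD.two_lt_k
  by_contra hc
  push_neg at hc
  have h4 : k * (k-1) < k * (v-1) := by
    exact Nat.mul_lt_mul_of_le_of_lt (le_refl k) (by omega) (by omega)
  have h5 : k * (v-1) ≤ lam * (v-1) := Nat.mul_le_mul_right _ hc
  omega

lemma sum_inter (hD : IsDesign 𝓑 v k lam) (hsym : 𝓑.card = v) {C : Finset P} (hC : C ∈ 𝓑) :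
    ∑ C' ∈ 𝓑.erase C, (C ∩ C').card = k * (k - 1) := by
  have h1 : ∀ C' ∈ 𝓑.erase C, (C ∩ C').card = ∑ x ∈ C, (if x ∈ C' then 1 else 0) := by
    intro C' _
    rw [← Finset.card_filter]
    congr 1
  rw [Finset.sum_congr rfl h1, Finset.sum_comm]
  have h2 : ∀ x ∈ C, ∑ C' ∈ 𝓑.erase C, (if x ∈ C' then 1 else 0) = k - 1 := by
    intro x hx
    rw [← Finset.card_filter, Finset.filter_erase,
      Finset.card_erase_of_mem (by simp [hx, hC]), deg_eq hD hsym]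
  rw [Finset.sum_congr rfl h2, Finset.sum_const, smul_eq_mul, hD.blocks_card C hC]

lemma sum_inter_sq (hD : IsDesign 𝓑 v k lam) (hsym : 𝓑.card = v) {C : Finset P} (hC : C ∈ 𝓑) :
    ∑ C' ∈ 𝓑.erase C, (C ∩ C').card ^ 2 = k * (k - 1) * lam := by
  have h1 : ∀ C' ∈ 𝓑.erase C, (C ∩ C').card ^ 2
      = ∑ x ∈ C, ∑ y ∈ C, (if x ∈ C' ∧ y ∈ C' then 1 else 0) := by
    intro C' _
    have : (C ∩ C').card = ∑ x ∈ C, (if x ∈ C' then 1 else 0) := by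
      rw [← Finset.card_filter]; congr 1
    rw [this, sq, Finset.sum_mul_sum]
    refine Finset.sum_congr rfl fun x _ => Finset.sum_congr rfl fun y _ => ?_
    split_ifs with ha hb hc <;> simp_all
  rw [Finset.sum_congr rfl h1, Finset.sum_comm]
  have h2 : ∀ x ∈ C, ∑ C' ∈ 𝓑.erase C, ∑ y ∈ C, (if x ∈ C' ∧ y ∈ C' then 1 else 0)
      = (k - 1) * lam := by
    intro x hx
    rw [Finset.sum_comm]
    have inner : ∀ y ∈ C, ∑ C' ∈ 𝓑.erase C, (if x ∈ C' ∧ y ∈ C' then 1 else 0)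
        = if x = y then k - 1 else lam - 1 := by
      intro y hy
      rw [← Finset.card_filter, Finset.filter_erase,
        Finset.card_erase_of_mem (by simp [hx, hy, hC])]
      by_cases hxy : x = y
      · subst hxy
        rw [if_pos rfl]
        have he : (𝓑.filter fun C' => x ∈ C' ∧ x ∈ C') = 𝓑.filter fun C' => x ∈ C' := by
          congr 1; ext C'; simp
        rw [he, deg_eq hD hsym]
      · rw [if_neg hxy, hD.pair_blocks x y hxy]
    rw [Finset.sum_congr rfl inner, ← Finset.sum_erase_add _ _ hx, if_pos rfl]
    have he2 : ∀ y ∈ C.erase x, (if x = y then k - 1 else lam - 1) = lam - 1 := by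
      intro y hy
      rw [if_neg (fun h => (Finset.mem_erase.mp hy).1 h.symm)]
    rw [Finset.sum_congr rfl he2, Finset.sum_const, smul_eq_mul,
      Finset.card_erase_of_mem hx, hD.blocks_card C hC]
    conv_rhs => rw [← Nat.succ_pred_eq_of_pos hD.lam_pos]
    rw [Nat.mul_succ, Nat.pred_eq_sub_one]
  rw [Finset.sum_congr rfl h2, Finset.sum_const, smul_eq_mul, hD.blocks_card C hC,
    mul_comm (k-1) lam]
  ring

lemma inter_card (hD : IsDesign 𝓑 v k lam) (hsym : 𝓑.card = v) {C C' : Finset P}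
    (hC : C ∈ 𝓑) (hC' : C' ∈ 𝓑) (hne : C' ≠ C) : (C ∩ C').card = lam := by
  have hk1 : 1 ≤ k := by have := hD.two_lt_k; omega
  have hv1 : 1 ≤ v := by have := hD.k_lt_v; omega
  have e0 := lam_eq hD hsym
  zify [hk1, hv1] at e0
  have e1 : ∑ C'' ∈ 𝓑.erase C, ((C ∩ C'').card : ℤ) = (k : ℤ) * ((k:ℤ) - 1) := by
    have := sum_inter hD hsym hC
    zify [hk1] at this
    rw [← this]
  have e2 : ∑ C'' ∈ 𝓑.erase C, ((C ∩ C'').card : ℤ)^2 = (k : ℤ) * ((k:ℤ) - 1) * lam := by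
    have := sum_inter_sq hD hsym hC
    zify [hk1] at this
    rw [← this]
  have e3 : (𝓑.erase C).card = v - 1 := by
    rw [Finset.card_erase_of_mem hC, hsym]
  have key : ∑ C'' ∈ 𝓑.erase C, (((C ∩ C'').card : ℤ) - lam)^2 = 0 := by
    have expand : ∀ C'' ∈ 𝓑.erase C, (((C ∩ C'').card : ℤ) - lam)^2
        = ((C ∩ C'').card : ℤ)^2 - 2*lam*((C ∩ C'').card : ℤ) + (lam:ℤ)^2 := by
      intro C'' _; ring
    rw [Finset.sum_congr rfl expand, Finset.sum_add_distrib, Finset.sum_sub_distrib,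
      Finset.sum_const, e2, ← Finset.mul_sum, e1, e3, nsmul_eq_mul]
    zify [hv1]
    ring_nf
    linear_combination (lam : ℤ) * e0
  have hmem : C' ∈ 𝓑.erase C := Finset.mem_erase.mpr ⟨hne, hC'⟩
  have hz := (Finset.sum_eq_zero_iff_of_nonneg (fun i _ => sq_nonneg _)).mp key C' hmem
  have : ((C ∩ C').card : ℤ) = lam := by
    have := pow_eq_zero_iff (n := 2) (by norm_num) |>.mp hz
    linarith
  exact_mod_cast this

lemma fix_count_eq (hD : IsDesign 𝓑 v k lam) (hsym : 𝓑.card = v) (σ : Equiv.Perm P)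
    (hσ : ∀ C ∈ 𝓑, σ • C ∈ 𝓑) :
    (Finset.univ.filter fun x => σ x = x).card = (𝓑.filter fun C => σ • C = C).card := by
  classical
  set fp := (Finset.univ.filter fun x => σ x = x).card with hfp
  set fb := (𝓑.filter fun C => σ • C = C).card with hfb
  have way1 : ∑ C ∈ 𝓑, (C ∩ σ • C).card = fb * k + (v - fb) * lam := by
    have h1 : ∀ C ∈ 𝓑, (C ∩ σ • C).card = if σ • C = C then k else lam := by
      intro C hC
      by_cases h : σ • C = C
      · rw [if_pos h, h, Finset.inter_self, hD.blocks_card C hC]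
      · rw [if_neg h]
        exact inter_card hD hsym hC (hσ C hC) h
    rw [Finset.sum_congr rfl h1, Finset.sum_ite, Finset.sum_const, Finset.sum_const,
      smul_eq_mul, smul_eq_mul, Finset.filter_not, Finset.card_sdiff_of_subset (Finset.filter_subset _ _),
      hsym]
  have way2 : ∑ C ∈ 𝓑, (C ∩ σ • C).card = fp * k + (v - fp) * lam := by
    have h1 : ∀ C ∈ 𝓑, (C ∩ σ • C).card = ∑ x : P, (if x ∈ C ∧ σ⁻¹ x ∈ C then 1 else 0) := by
      intro C hC
      rw [← Finset.card_filter]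
      congr 1
      ext y
      simp only [Finset.mem_inter, Finset.mem_filter, Finset.mem_univ, true_and]
      constructor
      · rintro ⟨h1, h2⟩
        refine ⟨h1, ?_⟩
        rw [Finset.mem_smul_finset] at h2
        obtain ⟨b, hb, hba⟩ := h2
        have hbe : b = σ⁻¹ y := by rw [← hba]; simp [Equiv.Perm.smul_def]
        rwa [← hbe]
      · rintro ⟨h1, h2⟩
        refine ⟨h1, ?_⟩
        rw [Finset.mem_smul_finset]
        exact ⟨σ⁻¹ y, h2, by simp [Equiv.Perm.smul_def]⟩
    rw [Finset.sum_congr rfl h1, Finset.sum_comm]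
    have h2 : ∀ x : P, ∑ C ∈ 𝓑, (if x ∈ C ∧ σ⁻¹ x ∈ C then 1 else 0)
        = if σ x = x then k else lam := by
      intro x
      rw [← Finset.card_filter]
      by_cases h : σ x = x
      · rw [if_pos h]
        have hfix : σ⁻¹ x = x := by conv_lhs => rw [← h]; simp
        
        have : (𝓑.filter fun C => x ∈ C ∧ σ⁻¹ x ∈ C) = 𝓑.filter fun C => x ∈ C := by
          congr 1; ext C; rw [hfix]; simp
        rw [this, deg_eq hD hsym]
      · rw [if_neg h]
        have hne : x ≠ σ⁻¹ x := by
          intro hcon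
          apply h
          conv_lhs => rw [hcon]
          simp
        exact hD.pair_blocks x (σ⁻¹ x) hne
    rw [Finset.sum_congr rfl (fun x _ => h2 x), Finset.sum_ite, Finset.sum_const,
      Finset.sum_const, smul_eq_mul, smul_eq_mul, Finset.filter_not,
      Finset.card_sdiff_of_subset (Finset.filter_subset _ _), Finset.card_univ, hD.card_points]
  have hfb_le : fb ≤ v := by rw [← hsym]; exact Finset.card_filter_le _ _
  have hfp_le : fp ≤ v := by
    rw [← hD.card_points, ← Finset.card_univ]; exact Finset.card_filter_le _ _
  have heq : fb * k + (v - fb) * lam = fp * k + (v - fp) * lam := by rw [← way1, way2]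
  zify [hfb_le, hfp_le] at heq
  have h9 : ((fb:ℤ) - fp) * ((k:ℤ) - lam) = 0 := by linear_combination heq
  have hkl : (k:ℤ) - lam ≠ 0 := by
    have := lam_lt_k hD hsym
    omega
  have := mul_eq_zero.mp h9
  rcases this with h | h
  · omega
  · exact absurd h hkl

end AuxDesign

lemma two_coset {H : Type*} [Group H] [Finite H] (M : Subgroup H)
    (hc : Nat.card H = 2 * Nat.card M) {a b : H} (ha : a ∉ M) (hb : b ∉ M) :
    a⁻¹ * b ∈ M := by
  classical
  have hdisj : Disjoint (a • (M : Set H)) (M : Set H) := by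
    rw [Set.disjoint_left]
    rintro x ⟨m, hm, rfl⟩ hxM
    exact ha (by simpa using mul_mem hxM (inv_mem hm))
  have hcard1 : (a • (M : Set H)).ncard = (M : Set H).ncard :=
    Set.ncard_image_of_injective _ (MulAction.injective a)
  have hMcard : (M : Set H).ncard = Nat.card M := (Nat.card_coe_set_eq _).symm
  have hunion : ((a • (M : Set H)) ∪ (M : Set H)).ncard = Nat.card H := by
    rw [Set.ncard_union_eq hdisj (Set.toFinite _) (Set.toFinite _), hcard1, hMcard, hc]
    ring
  have huniv : (a • (M : Set H)) ∪ (M : Set H) = Set.univ := by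
    apply Set.eq_of_subset_of_ncard_le (Set.subset_univ _)
    rw [hunion, Set.ncard_univ]
  have hbmem : b ∈ (a • (M : Set H)) ∪ (M : Set H) := huniv ▸ Set.mem_univ b
  rcases hbmem with ⟨m, hm, rfl⟩ | h
  · simpa using hm
  · exact absurd h hb

lemma two_coset_le {H : Type*} [Group H] [Finite H] {M K : Subgroup H} (hMK : M ≤ K)
    (hc : Nat.card K = 2 * Nat.card M) {a b : H} (haK : a ∈ K) (hbK : b ∈ K)
    (ha : a ∉ M) (hb : b ∉ M) : a⁻¹ * b ∈ M := by
  have hcard : Nat.card (M.subgroupOf K) = Nat.card M :=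
    Nat.card_congr (Subgroup.subgroupOfEquivOfLe hMK).toEquiv
  have := two_coset (M.subgroupOf K) (by rw [hcard]; exact hc)
    (a := ⟨a, haK⟩) (b := ⟨b, hbK⟩)
    (by rwa [Subgroup.mem_subgroupOf]) (by rwa [Subgroup.mem_subgroupOf])
  rwa [Subgroup.mem_subgroupOf] at this

lemma conj_mem_le {H : Type*} [Group H] [Finite H] {M K : Subgroup H} (hMK : M ≤ K)
    (hc : Nat.card K = 2 * Nat.card M) {a m : H} (haK : a ∈ K) (hm : m ∈ M) :
    a * m * a⁻¹ ∈ M := by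
  by_cases haM : a ∈ M
  · exact mul_mem (mul_mem haM hm) (inv_mem haM)
  · have hb : m * a⁻¹ ∉ M := by
      intro hcon
      exact haM (by simpa using inv_mem (mul_mem (inv_mem hm) hcon))
    have := two_coset_le hMK hc (a := a⁻¹) (b := m * a⁻¹) (inv_mem haK)
      (mul_mem (hMK hm) (inv_mem haK)) (fun h => haM (by simpa using inv_mem h)) hb
    simpa [mul_assoc] using this

lemma nat_card_orbit_stab {H : Type*} [Group H] {X : Type*} [MulAction H X] (x : X) :
    Nat.card H = Nat.card (MulAction.orbit H x) * Nat.card (MulAction.stabilizer H x) := by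
  rw [Nat.card_congr (MulAction.orbitEquivQuotientStabilizer H x)]
  exact Subgroup.card_eq_card_quotient_mul_card_subgroup _

section Group
variable {𝓑 : Finset (Finset P)} {v k lam : ℕ} {G : Subgroup (Equiv.Perm P)}

lemma smul_pt_def (g : ↥G) (x : P) : g • x = (g : Equiv.Perm P) x := rfl

lemma smul_bk_def (g : ↥G) (C : Finset P) : g • C = (g : Equiv.Perm P) • C := rfl

lemma exists_block_mem (hD : IsDesign 𝓑 v k lam) (hsym : 𝓑.card = v) (x : P) :
    ∃ C ∈ 𝓑, x ∈ C := by
  have h := deg_eq hD hsym x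
  have : 0 < (𝓑.filter (fun C => x ∈ C)).card := by rw [h]; have := hD.two_lt_k; omega
  obtain ⟨C, hC⟩ := Finset.card_pos.mp this
  rw [Finset.mem_filter] at hC
  exact ⟨C, hC.1, hC.2⟩

lemma point_trans (hD : IsDesign 𝓑 v k lam) (hsym : 𝓑.card = v)
    (hflag : IsFlagTransitive G 𝓑) (x y : P) : ∃ g : ↥G, g • x = y := by
  obtain ⟨Cx, hCx, hx⟩ := exists_block_mem hD hsym x
  obtain ⟨Cy, hCy, hy⟩ := exists_block_mem hD hsym y
  obtain ⟨g, hg, hgx, -⟩ := hflag Cx hCx Cy hCy x hx y hy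
  exact ⟨⟨g, hg⟩, hgx⟩

lemma block_trans (hflag : IsFlagTransitive G 𝓑) (hD : IsDesign 𝓑 v k lam)
    {C C' : Finset P} (hC : C ∈ 𝓑) (hC' : C' ∈ 𝓑) : ∃ g : ↥G, g • C = C' := by
  have hk : 0 < k := by have := hD.two_lt_k; omega
  have h1 : C.Nonempty := Finset.card_pos.mp (by rw [hD.blocks_card C hC]; omega)
  have h2 : C'.Nonempty := Finset.card_pos.mp (by rw [hD.blocks_card C' hC']; omega)
  obtain ⟨x, hx⟩ := h1
  obtain ⟨y, hy⟩ := h2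
  obtain ⟨g, hg, -, hgC⟩ := hflag C hC C' hC' x hx y hy
  exact ⟨⟨g, hg⟩, hgC⟩

lemma card_G (hD : IsDesign 𝓑 v k lam) (hsym : 𝓑.card = v)
    (hflag : IsFlagTransitive G 𝓑) (x : P) :
    Nat.card ↥G = v * Nat.card (MulAction.stabilizer G x) := by
  have horb : MulAction.orbit (↥G) x = Set.univ := by
    apply Set.eq_univ_of_forall
    intro y
    obtain ⟨g, hg⟩ := point_trans hD hsym hflag x y
    exact ⟨g, hg⟩
  have : Nat.card (MulAction.orbit (↥G) x) = v := by
    rw [horb, Nat.card_congr (Equiv.Set.univ P), Nat.card_eq_fintype_card, hD.card_points]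
  rw [nat_card_orbit_stab x, this]

lemma card_G_block (hD : IsDesign 𝓑 v k lam) (hsym : 𝓑.card = v)
    (hflag : IsFlagTransitive G 𝓑) (hAut : IsAutGroup G 𝓑) {C : Finset P} (hC : C ∈ 𝓑) :
    Nat.card ↥G = v * Nat.card (MulAction.stabilizer G C) := by
  have horb : MulAction.orbit (↥G) C = (↑𝓑 : Set (Finset P)) := by
    ext C'
    constructor
    · rintro ⟨g, rfl⟩
      exact hAut g g.2 C hC
    · intro hC'
      obtain ⟨g, hg⟩ := block_trans hflag hD hC hC'
      exact ⟨g, hg⟩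
  have : Nat.card (MulAction.orbit (↥G) C) = v := by
    rw [horb]
    have : Nat.card (↑𝓑 : Set (Finset P)) = (↑𝓑 : Set (Finset P)).ncard :=
      (Nat.card_coe_set_eq _)
    rw [this, Set.ncard_coe_finset, hsym]
  rw [nat_card_orbit_stab C, this]

end Group
section Group2
variable {𝓑 : Finset (Finset P)} {v k lam n : ℕ} {G : Subgroup (Equiv.Perm P)}

lemma orbit_stabC (hflag : IsFlagTransitive G 𝓑) {C : Finset P} (hC : C ∈ 𝓑)
    {x : P} (hx : x ∈ C) :
    MulAction.orbit ↥(MulAction.stabilizer G C) x = (↑C : Set P) := by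
  ext y
  constructor
  · rintro ⟨g, rfl⟩
    have h1 : (g : ↥G) • C = C := g.2
    have h2 : (g : ↥G) • x ∈ (g : ↥G) • C := Finset.smul_mem_smul_finset hx
    rw [h1] at h2
    exact h2
  · intro hy
    obtain ⟨g, hg, hgx, hgC⟩ := hflag C hC C hC x hx y hy
    refine ⟨⟨⟨g, hg⟩, ?_⟩, hgx⟩
    exact hgC

lemma no_fix_in_block (hD : IsDesign 𝓑 v k lam) (hflag : IsFlagTransitive G 𝓑)
    {C : Finset P} (hC : C ∈ 𝓑) {N : Subgroup ↥G} (hNC : N ≤ MulAction.stabilizer G C)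
    (hcard : Nat.card N = n) (hn : 3 ≤ n)
    (h2n : Nat.card (MulAction.stabilizer G C) = 2 * n)
    {x : P} (hx : x ∈ C) (hfix : ∀ g ∈ N, g • x = x) : False := by
  set K := MulAction.stabilizer G C
  have horb : Nat.card (MulAction.orbit ↥K x) = k := by
    rw [orbit_stabC hflag hC hx]
    rw [Nat.card_coe_set_eq, Set.ncard_coe_finset, hD.blocks_card C hC]
  have hos : Nat.card ↥K = k * Nat.card (MulAction.stabilizer ↥K x) := by
    rw [nat_card_orbit_stab x, horb]
  have hMle : N.subgroupOf K ≤ MulAction.stabilizer ↥K x := by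
    rintro ⟨g, hgK⟩ hgM
    rw [Subgroup.mem_subgroupOf] at hgM
    exact hfix g hgM
  have hcardM : Nat.card (N.subgroupOf K) = n := by
    rw [Nat.card_congr (Subgroup.subgroupOfEquivOfLe hNC).toEquiv, hcard]
  have hle : n ≤ Nat.card (MulAction.stabilizer ↥K x) := by
    rw [← hcardM]
    exact Subgroup.card_le_of_le hMle
  have hk3 : 3 ≤ k := hD.two_lt_k
  nlinarith [h2n, hos]

end Group2
section Group3
variable {𝓑 : Finset (Finset P)} {v k lam : ℕ} {G : Subgroup (Equiv.Perm P)}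

lemma stab_flag {x : P} {C C' : Finset P} (hflag : IsFlagTransitive G 𝓑)
    (hC : C ∈ 𝓑) (hC' : C' ∈ 𝓑) (hxC : x ∈ C) (hxC' : x ∈ C') :
    ∃ w : ↥G, w ∈ MulAction.stabilizer G x ∧ w • C = C' := by
  obtain ⟨g, hg, hgx, hgC⟩ := hflag C hC C' hC' x hxC x hxC'
  exact ⟨⟨g, hg⟩, hgx, hgC⟩

lemma N_le_stab {N : Subgroup ↥G} {x : P} (hfx : ∀ g ∈ N, g • x = x) :
    N ≤ MulAction.stabilizer G x := fun g hg => hfx g hg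

lemma two_class (hflag : IsFlagTransitive G 𝓑) {N : Subgroup ↥G} {a : P}
    (hstab : Nat.card (MulAction.stabilizer G a) = 2 * Nat.card N)
    (hfa : ∀ g ∈ N, g • a = a) {C1 C2 C3 : Finset P}
    (hC1 : C1 ∈ 𝓑) (hC2 : C2 ∈ 𝓑) (hC3 : C3 ∈ 𝓑)
    (ha1 : a ∈ C1) (ha2 : a ∈ C2) (ha3 : a ∈ C3)
    (h12 : ¬∃ h ∈ N, h • C1 = C2) (h13 : ¬∃ h ∈ N, h • C1 = C3) :
    ∃ h ∈ N, h • C2 = C3 := by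
  obtain ⟨g, hgstab, hgC⟩ := stab_flag hflag hC1 hC3 ha1 ha3
  obtain ⟨w, hwstab, hwC⟩ := stab_flag hflag hC1 hC2 ha1 ha2
  have hgN : g ∉ N := fun h => h13 ⟨g, h, hgC⟩
  have hwN : w ∉ N := fun h => h12 ⟨w, h, hwC⟩
  have hm : w⁻¹ * g ∈ N := two_coset_le (N_le_stab hfa) hstab hwstab hgstab hwN hgN
  refine ⟨w * (w⁻¹ * g) * w⁻¹, conj_mem_le (N_le_stab hfa) hstab hwstab hm, ?_⟩
  rw [← hwC, ← hgC]
  rw [smul_smul]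
  congr 1
  group

lemma single_orbit (hD : IsDesign 𝓑 v k lam) (hsym : 𝓑.card = v)
    (hflag : IsFlagTransitive G 𝓑) (hAut : IsAutGroup G 𝓑) {N : Subgroup ↥G} {x y : P}
    (hstab : Nat.card (MulAction.stabilizer G x) = 2 * Nat.card N)
    (hxy : x ≠ y) (hfx : ∀ g ∈ N, g • x = x) (hfy : ∀ g ∈ N, g • y = y)
    {C C' : Finset P} (hC : C ∈ 𝓑) (hxC : x ∈ C) (hyC : y ∈ C)
    (hC' : C' ∈ 𝓑) (hxC' : x ∈ C') (hyC' : y ∈ C') :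
    ∃ h ∈ N, h • C = C' := by
  by_contra hno
  -- then every block through x contains y
  have hall : ∀ C'' ∈ 𝓑, x ∈ C'' → y ∈ C'' := by
    intro C'' hC'' hxC''
    obtain ⟨g, hgstab, hgC⟩ := stab_flag hflag hC hC'' hxC hxC''
    by_cases hgN : g ∈ N
    · rw [← hgC]
      have : g • y ∈ g • C := Finset.smul_mem_smul_finset hyC
      rwa [hfy g hgN] at this
    · obtain ⟨w, hwstab, hwC⟩ := stab_flag hflag hC hC' hxC hxC'
      have hwN : w ∉ N := fun h => hno ⟨w, h, hwC⟩
      have hm : w⁻¹ * g ∈ N := two_coset_le (N_le_stab hfx) hstab hwstab hgstab hwN hgN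
      have hconj : w * (w⁻¹ * g) * w⁻¹ ∈ N := conj_mem_le (N_le_stab hfx) hstab hwstab hm
      have hCeq : C'' = (w * (w⁻¹ * g) * w⁻¹) • C' := by
        rw [← hwC, ← hgC, smul_smul]
        congr 1
        group
      rw [hCeq]
      have : (w * (w⁻¹ * g) * w⁻¹) • y ∈ (w * (w⁻¹ * g) * w⁻¹) • C' :=
        Finset.smul_mem_smul_finset hyC'
      rwa [hfy _ hconj] at this
  -- contradiction: k ≤ lam
  have hsub : 𝓑.filter (fun C'' => x ∈ C'') ⊆ 𝓑.filter (fun C'' => x ∈ C'' ∧ y ∈ C'') := by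
    intro C'' hmem
    rw [Finset.mem_filter] at hmem ⊢
    exact ⟨hmem.1, hmem.2, hall C'' hmem.1 hmem.2⟩
  have hcards := Finset.card_le_card hsub
  rw [deg_eq hD hsym, hD.pair_blocks x y hxy] at hcards
  exact absurd hcards (by have := lam_lt_k hD hsym; omega)

end Group3
section Group4
variable {𝓑 : Finset (Finset P)} {v k lam : ℕ} {G : Subgroup (Equiv.Perm P)}

lemma fix_smul_mem {N K' : Subgroup ↥G} (hMK : N ≤ K') (hc : Nat.card K' = 2 * Nat.card N)
    {w : ↥G} (hw : w ∈ K')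
    {z : P} (hz : ∀ g ∈ N, g • z = z) : ∀ g ∈ N, g • (w • z) = w • z := by
  intro g hg
  have hconj : w⁻¹ * g * w⁻¹⁻¹ ∈ N :=
    conj_mem_le hMK hc (inv_mem hw) hg
  have : g * w = w * (w⁻¹ * g * w⁻¹⁻¹) := by group
  rw [smul_smul, this, ← smul_smul, hz _ hconj]

lemma halves (hD : IsDesign 𝓑 v k lam) (hsym : 𝓑.card = v)
    (hflag : IsFlagTransitive G 𝓑) (hAut : IsAutGroup G 𝓑) {N : Subgroup ↥G}
    (hstab : ∀ p : P, Nat.card (MulAction.stabilizer G p) = 2 * Nat.card N)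
    (F : Finset P) (hF : ∀ z, z ∈ F ↔ ∀ g ∈ N, g • z = z)
    {x y : P} (hx : x ∈ F) (hy : y ∈ F) (hxy : x ≠ y) :
    ∃ C1 C2 : Finset P, C1 ∈ 𝓑 ∧ x ∈ C1 ∧ y ∈ C1 ∧ C2 ∈ 𝓑 ∧ x ∈ C2 ∧
      F.filter (· ∈ C1) ∪ F.filter (· ∈ C2) = F ∧
      F.filter (· ∈ C1) ∩ F.filter (· ∈ C2) = {x} ∧
      (F.filter (· ∈ C1)).card = (F.filter (· ∈ C2)).card := by
  have hfx : ∀ g ∈ N, g • x = x := (hF x).mp hx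
  have hfy : ∀ g ∈ N, g • y = y := (hF y).mp hy
  have hlampos := hD.lam_pos
  have hlamk := lam_lt_k hD hsym
  -- C1
  have hBT : 0 < (𝓑.filter (fun C => x ∈ C ∧ y ∈ C)).card := by
    rw [hD.pair_blocks x y hxy]; exact hlampos
  obtain ⟨C1, hC1mem⟩ := Finset.card_pos.mp hBT
  rw [Finset.mem_filter] at hC1mem
  have hC1 := hC1mem.1
  have hxC1 := hC1mem.2.1
  have hyC1 := hC1mem.2.2
  -- C2
  have hC2ex : ∃ C2 ∈ 𝓑, x ∈ C2 ∧ ¬∃ h ∈ N, h • C1 = C2 := by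
    by_contra hcon
    push_neg at hcon
    have hsub : 𝓑.filter (fun C => x ∈ C) ⊆ 𝓑.filter (fun C => x ∈ C ∧ y ∈ C) := by
      intro C'' hmem
      rw [Finset.mem_filter] at hmem ⊢
      obtain ⟨h, hhN, hhC⟩ := hcon C'' hmem.1 hmem.2
      refine ⟨hmem.1, hmem.2, ?_⟩
      rw [← hhC]
      have := Finset.smul_mem_smul_finset (a := h) hyC1
      rwa [hfy h hhN] at this
    have := Finset.card_le_card hsub
    rw [deg_eq hD hsym, hD.pair_blocks x y hxy] at this
    omega
  obtain ⟨C2, hC2, hxC2, hnorel⟩ := hC2ex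
  refine ⟨C1, C2, hC1, hxC1, hyC1, hC2, hxC2, ?_, ?_, ?_⟩
  -- union
  · ext z
    simp only [Finset.mem_union, Finset.mem_filter]
    constructor
    · rintro (⟨hzF, _⟩ | ⟨hzF, _⟩) <;> exact hzF
    · intro hzF
      have hfz : ∀ g ∈ N, g • z = z := (hF z).mp hzF
      by_cases hzx : z = x
      · subst hzx; exact Or.inl ⟨hzF, hxC1⟩
      · have hBT2 : 0 < (𝓑.filter (fun C => x ∈ C ∧ z ∈ C)).card := by
          rw [hD.pair_blocks x z (fun h => hzx h.symm)]; exact hlampos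
        obtain ⟨Cs, hCsmem⟩ := Finset.card_pos.mp hBT2
        rw [Finset.mem_filter] at hCsmem
        have hCs := hCsmem.1
        have hxCs := hCsmem.2.1
        have hzCs := hCsmem.2.2
        by_cases hrel : ∃ h ∈ N, h • C1 = Cs
        · obtain ⟨h, hhN, hhC⟩ := hrel
          left
          refine ⟨hzF, ?_⟩
          have : h⁻¹ • z ∈ h⁻¹ • Cs := Finset.smul_mem_smul_finset hzCs
          rw [hfz _ (inv_mem hhN), ← hhC, inv_smul_smul] at this
          exact this
        · obtain ⟨h, hhN, hhC⟩ := two_class hflag (hstab x) hfx hC1 hC2 hCs hxC1 hxC2 hxCs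
            hnorel hrel
          right
          refine ⟨hzF, ?_⟩
          have : h⁻¹ • z ∈ h⁻¹ • Cs := Finset.smul_mem_smul_finset hzCs
          rw [hfz _ (inv_mem hhN), ← hhC, inv_smul_smul] at this
          exact this
  -- intersection
  · ext z
    simp only [Finset.mem_inter, Finset.mem_filter, Finset.mem_singleton]
    constructor
    · rintro ⟨⟨hzF, hz1⟩, -, hz2⟩
      by_contra hzx
      have hfz : ∀ g ∈ N, g • z = z := (hF z).mp hzF
      exact hnorel (single_orbit hD hsym hflag hAut (hstab x) (fun h => hzx h.symm) hfx hfz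
        hC1 hxC1 hz1 hC2 hxC2 hz2)
    · rintro rfl
      exact ⟨⟨hx, hxC1⟩, hx, hxC2⟩
  -- cards
  · obtain ⟨w, hwstab, hwC⟩ := stab_flag hflag hC1 hC2 hxC1 hxC2
    apply le_antisymm
    · apply Finset.card_le_card_of_injOn (fun z => w • z)
      · intro z hz
        rw [Finset.mem_coe, Finset.mem_filter] at hz ⊢
        refine ⟨(hF _).mpr (fix_smul_mem (N_le_stab hfx) (hstab x) hwstab ((hF z).mp hz.1)), ?_⟩
        rw [← hwC]
        exact Finset.smul_mem_smul_finset hz.2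
      · intro a _ b _ hab
        exact smul_left_cancel w hab
    · apply Finset.card_le_card_of_injOn (fun z => w⁻¹ • z)
      · intro z hz
        rw [Finset.mem_coe, Finset.mem_filter] at hz ⊢
        refine ⟨(hF _).mpr (fix_smul_mem (N_le_stab hfx) (hstab x) (inv_mem hwstab) ((hF z).mp hz.1)), ?_⟩
        have : w⁻¹ • z ∈ w⁻¹ • C2 := Finset.smul_mem_smul_finset hz.2
        rwa [← hwC, inv_smul_smul] at this
      · intro a _ b _ hab
        exact smul_left_cancel w⁻¹ hab
end Group4
section Group5
variable {𝓑 : Finset (Finset P)} {v k lam : ℕ} {G : Subgroup (Equiv.Perm P)}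

lemma f_one_or_three (hD : IsDesign 𝓑 v k lam) (hsym : 𝓑.card = v)
    (hflag : IsFlagTransitive G 𝓑) (hAut : IsAutGroup G 𝓑) {N : Subgroup ↥G}
    (hstab : ∀ p : P, Nat.card (MulAction.stabilizer G p) = 2 * Nat.card N)
    (F : Finset P) (hF : ∀ z, z ∈ F ↔ ∀ g ∈ N, g • z = z) (hFpos : 0 < F.card) :
    F.card = 1 ∨ F.card = 3 := by
  by_cases h1 : F.card = 1
  · exact Or.inl h1
  right
  have h2 : 1 < F.card := by omega
  obtain ⟨x, hx, y, hy, hyx⟩ := Finset.one_lt_card.mp h2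
  obtain ⟨C1, C2, hC1, hxC1, hyC1, hC2, hxC2, hunion, hinter, hcards⟩ :=
    halves hD hsym hflag hAut hstab F hF hx hy hyx
  set S1 := F.filter (· ∈ C1) with hS1
  set S2 := F.filter (· ∈ C2) with hS2
  have hkey : F.card + 1 = 2 * S1.card := by
    have := Finset.card_union_add_card_inter S1 S2
    rw [hunion, hinter, ← hcards] at this
    simp at this
    omega
  by_cases hs : S1.card ≤ 2
  · omega
  push_neg at hs
  exfalso
  obtain ⟨y1, hy1S, hy1x⟩ := Finset.exists_mem_ne (s := S1) (by omega) x
  have hs2 : 2 < S2.card := by omega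
  obtain ⟨z1, hz1S, hz1x⟩ := Finset.exists_mem_ne (s := S2) (by omega) x
  have hy1F : y1 ∈ F := (Finset.mem_filter.mp hy1S).1
  have hy1C1 : y1 ∈ C1 := (Finset.mem_filter.mp hy1S).2
  have hz1F : z1 ∈ F := (Finset.mem_filter.mp hz1S).1
  have hz1C2 : z1 ∈ C2 := (Finset.mem_filter.mp hz1S).2
  have hy1z1 : y1 ≠ z1 := by
    intro h
    apply hy1x
    have : y1 ∈ S1 ∩ S2 := Finset.mem_inter.mpr ⟨hy1S, h ▸ hz1S⟩
    rw [hinter] at this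
    exact Finset.mem_singleton.mp this
  obtain ⟨C1', C2', hC1', hy1C1', hz1C1', hC2', hy1C2', hunion', hinter', hcards'⟩ :=
    halves hD hsym hflag hAut hstab F hF hy1F hz1F hy1z1
  set S1' := F.filter (· ∈ C1') with hS1'
  set S2' := F.filter (· ∈ C2') with hS2'
  have hkey' : F.card + 1 = 2 * S1'.card := by
    have := Finset.card_union_add_card_inter S1' S2'
    rw [hunion', hinter', ← hcards'] at this
    simp at this
    omega
  have hs' : 2 < S1'.card := by omega
  have hcl1 : (S1' ∩ S1).card ≤ 1 := by
    rw [Finset.card_le_one]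
    intro a ha b hb
    by_contra hab
    rw [Finset.mem_inter] at ha hb
    have haF : a ∈ F := (Finset.mem_filter.mp ha.1).1
    have hbF : b ∈ F := (Finset.mem_filter.mp hb.1).1
    obtain ⟨h, hhN, hhC⟩ := single_orbit hD hsym hflag hAut (hstab a) hab
      ((hF a).mp haF) ((hF b).mp hbF) hC1 (Finset.mem_filter.mp ha.2).2
      (Finset.mem_filter.mp hb.2).2 hC1' (Finset.mem_filter.mp ha.1).2
      (Finset.mem_filter.mp hb.1).2
    apply hz1x
    have hz1C1 : z1 ∈ C1 := by
      have : h⁻¹ • z1 ∈ h⁻¹ • C1' := Finset.smul_mem_smul_finset hz1C1'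
      rwa [((hF z1).mp hz1F) _ (inv_mem hhN), ← hhC, inv_smul_smul] at this
    have : z1 ∈ S1 ∩ S2 := Finset.mem_inter.mpr ⟨Finset.mem_filter.mpr ⟨hz1F, hz1C1⟩, hz1S⟩
    rw [hinter] at this
    exact Finset.mem_singleton.mp this
  have hcl2 : (S1' ∩ S2).card ≤ 1 := by
    rw [Finset.card_le_one]
    intro a ha b hb
    by_contra hab
    rw [Finset.mem_inter] at ha hb
    have haF : a ∈ F := (Finset.mem_filter.mp ha.1).1
    have hbF : b ∈ F := (Finset.mem_filter.mp hb.1).1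
    obtain ⟨h, hhN, hhC⟩ := single_orbit hD hsym hflag hAut (hstab a) hab
      ((hF a).mp haF) ((hF b).mp hbF) hC2 (Finset.mem_filter.mp ha.2).2
      (Finset.mem_filter.mp hb.2).2 hC1' (Finset.mem_filter.mp ha.1).2
      (Finset.mem_filter.mp hb.1).2
    apply hy1x
    have hy1C2 : y1 ∈ C2 := by
      have : h⁻¹ • y1 ∈ h⁻¹ • C1' := Finset.smul_mem_smul_finset hy1C1'
      rwa [((hF y1).mp hy1F) _ (inv_mem hhN), ← hhC, inv_smul_smul] at this
    have : y1 ∈ S1 ∩ S2 := Finset.mem_inter.mpr ⟨hy1S, Finset.mem_filter.mpr ⟨hy1F, hy1C2⟩⟩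
    rw [hinter] at this
    exact Finset.mem_singleton.mp this
  have hsub : S1' ⊆ (S1' ∩ S1) ∪ (S1' ∩ S2) := by
    intro u hu
    have huF : u ∈ F := (Finset.mem_filter.mp hu).1
    rw [← hunion] at huF
    rcases Finset.mem_union.mp huF with h | h
    · exact Finset.mem_union_left _ (Finset.mem_inter.mpr ⟨hu, h⟩)
    · exact Finset.mem_union_right _ (Finset.mem_inter.mpr ⟨hu, h⟩)
  have := Finset.card_le_card hsub
  have := Finset.card_union_le (S1' ∩ S1) (S1' ∩ S2)
  omega
end Group5

section Group6
variable {𝓑 : Finset (Finset P)} {v k lam : ℕ} {G : Subgroup (Equiv.Perm P)}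

lemma zpowers_isCyclic' {H : Type*} [Group H] (g : H) : IsCyclic (Subgroup.zpowers g) := by
  constructor
  refine ⟨⟨g, Subgroup.mem_zpowers g⟩, ?_⟩
  rintro ⟨x, m, rfl⟩
  exact ⟨m, by ext; simp⟩

lemma perm_zpow_fix (σ : Equiv.Perm P) {z : P} (hz : σ z = z) (m : ℤ) : (σ ^ m) z = z := by
  have hnat : ∀ j : ℕ, (σ ^ j) z = z := by
    intro j
    induction j with
    | zero => simp
    | succ i ih => rw [pow_succ, Equiv.Perm.mul_apply, hz, ih]
  rcases m with j | j
  · simpa using hnat j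
  · rw [zpow_negSucc]
    have := hnat (j + 1)
    exact Equiv.Perm.inv_eq_iff_eq.mpr this.symm

lemma fix_finset_eq {N : Subgroup ↥G} (hcyc : IsCyclic N) :
    ∃ g₀ : ↥G, g₀ ∈ N ∧ ∀ z : P, (∀ g ∈ N, g • z = z) ↔ (g₀ : Equiv.Perm P) z = z := by
  obtain ⟨gen, hgen⟩ := hcyc.exists_generator
  refine ⟨(gen : ↥G), gen.2, fun z => ⟨fun h => h _ gen.2, fun hσ g hg => ?_⟩⟩
  obtain ⟨m, hm⟩ := hgen ⟨g, hg⟩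
  have hgm : g = (gen : ↥G) ^ m := by
    have := congrArg (fun (t : ↥N) => (t : ↥G)) hm
    simpa using this.symm
  have hcoe : (g : Equiv.Perm P) = ((gen : ↥G) : Equiv.Perm P) ^ m := by
    rw [hgm]; push_cast; rfl
  show (g : Equiv.Perm P) z = z
  rw [hcoe]
  exact perm_zpow_fix _ hσ m

lemma fix_pos (hD : IsDesign 𝓑 v k lam) (hsym : 𝓑.card = v) (hAut : IsAutGroup G 𝓑)
    {N : Subgroup ↥G} (hcyc : IsCyclic N) {B : Finset P} (hB : B ∈ 𝓑)
    (hNB : N ≤ MulAction.stabilizer G B)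
    (F : Finset P) (hF : ∀ z, z ∈ F ↔ ∀ g ∈ N, g • z = z) : 0 < F.card := by
  classical
  obtain ⟨g₀, hg₀N, hchar⟩ := fix_finset_eq (G := G) hcyc
  set σ : Equiv.Perm P := (g₀ : Equiv.Perm P) with hσdef
  have hFeq : F = Finset.univ.filter (fun z => σ z = z) := by
    ext z
    rw [hF z, Finset.mem_filter]
    simp only [Finset.mem_univ, true_and]
    exact hchar z
  have hσaut : ∀ C ∈ 𝓑, σ • C ∈ 𝓑 := fun C hC => hAut _ (SetLike.coe_mem g₀) C hC
  have hcount := fix_count_eq hD hsym σ hσaut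
  have hBfix : σ • B = B := hNB hg₀N
  have hBmem : B ∈ 𝓑.filter (fun C => σ • C = C) := Finset.mem_filter.mpr ⟨hB, hBfix⟩
  have : 0 < (𝓑.filter (fun C => σ • C = C)).card := Finset.card_pos.mpr ⟨B, hBmem⟩
  rw [hFeq, hcount]
  exact this
end Group6


/-- **Lemma 6.5.** Let `G` be a flag-transitive automorphism group of a symmetric design
with `λ > 1` and suppose `G_B ≅ D_{2n}` with `n ≥ 3`. Then `G_B = G_x` for some point
`x ∉ B`, and the number of common fixed points of a cyclic subgroup of order `n` of
`G_B` is `1` or `3`. -/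
theorem stmt_17 (𝓑 : Finset (Finset P)) (v k lam n : ℕ)
    (hD : IsDesign 𝓑 v k lam) (hsym : 𝓑.card = v) (hlam : 1 < lam)
    (G : Subgroup (Equiv.Perm P)) (hAut : IsAutGroup G 𝓑)
    (hflag : IsFlagTransitive G 𝓑) (hn : 3 ≤ n)
    (B : Finset P) (hB : B ∈ 𝓑)
    (hdih : Nonempty (MulAction.stabilizer G B ≃* DihedralGroup n)) :
    (∃ x : P, x ∉ B ∧ MulAction.stabilizer G B = MulAction.stabilizer G x) ∧
    (∀ N : Subgroup G, N ≤ MulAction.stabilizer G B → IsCyclic N → Nat.card N = n →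
      Nat.card {x : P // ∀ g ∈ N, g • x = x} = 1 ∨
        Nat.card {x : P // ∀ g ∈ N, g • x = x} = 3) := by
  classical
  haveI : NeZero n := ⟨by omega⟩
  have hv : 0 < v := by have := hD.k_lt_v; omega
  have hcardB : Nat.card (MulAction.stabilizer G B) = 2 * n := by
    rw [Nat.card_congr hdih.some.toEquiv, Nat.card_eq_fintype_card, DihedralGroup.card]
  have hstabpt : ∀ p : P, Nat.card (MulAction.stabilizer G p) = 2 * n := by
    intro p
    have h1 := card_G hD hsym hflag p
    have h2 := card_G_block hD hsym hflag hAut hB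
    rw [hcardB] at h2
    have h3 : v * Nat.card (MulAction.stabilizer G p) = v * (2 * n) := by rw [← h1, h2]
    exact Nat.eq_of_mul_eq_mul_left hv h3
  -- core : fixed-point finsets of qualifying cyclic subgroups have size 1 or 3
  have core : ∀ N : Subgroup ↥G, N ≤ MulAction.stabilizer G B → IsCyclic N → Nat.card N = n →
      ∀ F : Finset P, (∀ z, z ∈ F ↔ ∀ g ∈ N, g • z = z) → (F.card = 1 ∨ F.card = 3) := by
    intro N hNB hcyc hNcard F hF
    refine f_one_or_three hD hsym hflag hAut (N := N) (fun p => by rw [hNcard]; exact hstabpt p)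
      F hF (fix_pos hD hsym hAut hcyc hB hNB F hF)
  constructor
  · -- Part 1
    set K := MulAction.stabilizer G B with hK
    set e := hdih.some with he
    set N₁ : Subgroup ↥K := (Subgroup.zpowers (DihedralGroup.r 1)).comap e.toMonoidHom with hN₁
    set N₀ : Subgroup ↥G := N₁.map K.subtype with hN₀
    have hN₀le : N₀ ≤ K := Subgroup.map_subtype_le N₁
    have hN₁eq : N₁ = (Subgroup.zpowers (DihedralGroup.r 1)).map e.symm.toMonoidHom := by
      rw [hN₁, Subgroup.comap_equiv_eq_map_symm']
    have hcardR : Nat.card (Subgroup.zpowers (DihedralGroup.r 1 : DihedralGroup n)) = n := by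
      rw [Nat.card_zpowers, DihedralGroup.orderOf_r_one]
    have hcardN₁ : Nat.card N₁ = n := by
      rw [hN₁eq, ← Nat.card_congr (Subgroup.equivMapOfInjective _ _ e.symm.injective).toEquiv]
      exact hcardR
    have hcardN₀ : Nat.card N₀ = n := by
      rw [hN₀, ← Nat.card_congr (Subgroup.equivMapOfInjective _ _ K.subtype_injective).toEquiv]
      exact hcardN₁
    have hcycR : IsCyclic (Subgroup.zpowers (DihedralGroup.r 1 : DihedralGroup n)) :=
      zpowers_isCyclic' _
    have hcycN₁ : IsCyclic N₁ := by
      rw [hN₁eq]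
      exact isCyclic_of_surjective _ (Subgroup.equivMapOfInjective _ _ e.symm.injective).surjective
    have hcycN₀ : IsCyclic N₀ := by
      rw [hN₀]
      exact isCyclic_of_surjective _
        (Subgroup.equivMapOfInjective _ _ K.subtype_injective).surjective
    set F₀ : Finset P := Finset.univ.filter (fun z => ∀ g ∈ N₀, g • z = z) with hF₀def
    have hF₀ : ∀ z, z ∈ F₀ ↔ ∀ g ∈ N₀, g • z = z := by
      intro z; rw [hF₀def, Finset.mem_filter]; simp
    have hcard13 := core N₀ hN₀le hcycN₀ hcardN₀ F₀ hF₀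
    have hnotB : ∀ z ∈ F₀, z ∉ B := by
      intro z hz hzB
      exact no_fix_in_block hD hflag hB hN₀le hcardN₀ hn hcardB hzB ((hF₀ z).mp hz)
    have hc2 : Nat.card K = 2 * Nat.card N₀ := by rw [hcardN₀, hcardB]
    have hmapF : ∀ g ∈ K, ∀ z ∈ F₀, g • z ∈ F₀ := by
      intro g hg z hz
      exact (hF₀ _).mpr (fix_smul_mem hN₀le hc2 hg ((hF₀ z).mp hz))
    -- find a common fixed point of K
    have hfix : ∃ x ∈ F₀, ∀ g ∈ K, g • x = x := by
      have hstep : ∀ x ∈ F₀, (∀ t ∈ K, t ∉ N₀ → t • x = x) → ∀ g ∈ K, g • x = x := by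
        intro x hxF₀ hT g hg
        by_cases hgN : g ∈ N₀
        · exact (hF₀ x).mp hxF₀ g hgN
        · exact hT g hg hgN
      rcases hcard13 with h1 | h3
      · obtain ⟨x, hxeq⟩ := Finset.card_eq_one.mp h1
        have hxF₀ : x ∈ F₀ := by rw [hxeq]; exact Finset.mem_singleton_self x
        refine ⟨x, hxF₀, hstep x hxF₀ ?_⟩
        intro t htK _
        have := hmapF t htK x hxF₀
        rw [hxeq] at this
        exact Finset.mem_singleton.mp this
      · obtain ⟨x1, x2, x3, h12, h13, h23, hset⟩ := Finset.card_eq_three.mp h3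
        have hx1 : x1 ∈ F₀ := by rw [hset]; simp
        have hx2 : x2 ∈ F₀ := by rw [hset]; simp
        have hx3 : x3 ∈ F₀ := by rw [hset]; simp
        -- choose t ∈ K \ N₀
        have htex : ∃ t, t ∈ K ∧ t ∉ N₀ := by
          by_contra hcon
          push_neg at hcon
          have hle : K ≤ N₀ := fun g hg => hcon g hg
          have := Subgroup.card_le_of_le hle
          rw [hcardN₀, hcardB] at this
          omega
        obtain ⟨t, htK, htN⟩ := htex
        have ht2 : t * t ∈ N₀ := by
          have := two_coset_le hN₀le hc2 (a := t⁻¹) (b := t) (inv_mem htK) htK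
            (fun h => htN (by simpa using inv_mem h)) htN
          simpa using this
        have ht2fix : ∀ z ∈ F₀, t • t • z = z := by
          intro z hz
          rw [smul_smul]
          exact (hF₀ z).mp hz _ ht2
        have hmem3 : ∀ z ∈ F₀, z = x1 ∨ z = x2 ∨ z = x3 := by
          intro z hz
          rw [hset] at hz
          simpa using hz
        -- find fixed point of t among x1 x2 x3
        have hfixt : ∃ x ∈ F₀, t • x = x := by
          rcases hmem3 _ (hmapF t htK x1 hx1) with e1 | e1 | e1
          · exact ⟨x1, hx1, e1⟩
          · -- t x1 = x2, so t x2 = x1, so t x3 = x3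
            have e2 : t • x2 = x1 := by rw [← e1]; exact ht2fix x1 hx1
            refine ⟨x3, hx3, ?_⟩
            rcases hmem3 _ (hmapF t htK x3 hx3) with e3 | e3 | e3
            · exfalso; apply h23; exact smul_left_cancel t (by rw [e3, e2])
            · exfalso; apply h13; exact smul_left_cancel t (by rw [e3, e1])
            · exact e3
          · have e2 : t • x3 = x1 := by rw [← e1]; exact ht2fix x1 hx1
            refine ⟨x2, hx2, ?_⟩
            rcases hmem3 _ (hmapF t htK x2 hx2) with e3 | e3 | e3
            · exfalso; apply h23; exact (smul_left_cancel t (by rw [e3, e2])).symm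
            · exact e3
            · exfalso; apply h12; exact smul_left_cancel t (by rw [e3, e1])
        obtain ⟨x, hxF₀, htx⟩ := hfixt
        refine ⟨x, hxF₀, hstep x hxF₀ ?_⟩
        intro s hsK hsN
        have hm : t⁻¹ * s ∈ N₀ := two_coset_le hN₀le hc2 htK hsK htN hsN
        have hrw : s = t * (t⁻¹ * s) := by group
        rw [hrw, ← smul_smul, (hF₀ x).mp hxF₀ _ hm, htx]
    obtain ⟨x, hxF₀, hfixall⟩ := hfix
    have hKle : K ≤ MulAction.stabilizer G x := fun g hg => hfixall g hg
    have hcards : Nat.card (MulAction.stabilizer G x) ≤ Nat.card K := by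
      rw [hstabpt x, hcardB]
    have hSeteq : (K : Set ↥G) = (MulAction.stabilizer G x : Set ↥G) := by
      apply Set.eq_of_subset_of_ncard_le hKle
      rw [← Nat.card_coe_set_eq, ← Nat.card_coe_set_eq]
      exact hcards
    exact ⟨x, hnotB x hxF₀, SetLike.ext' hSeteq⟩
  · -- Part 2
    intro N hNle hcyc hNcard
    set F : Finset P := Finset.univ.filter (fun z => ∀ g ∈ N, g • z = z) with hFdef
    have hF : ∀ z, z ∈ F ↔ ∀ g ∈ N, g • z = z := by
      intro z; rw [hFdef, Finset.mem_filter]; simp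
    have hcard : Nat.card {x : P // ∀ g ∈ N, g • x = x} = F.card := by
      rw [Nat.card_eq_fintype_card, hFdef]
      exact Fintype.card_subtype _
    rcases core N hNle hcyc hNcard F hF with h | h
    · left; rw [hcard, h]
    · right; rw [hcard, h]
end

section
/- Let D = (P,𝓑) be a symmetric 2-(v,k,λ) design with λ > 1 and let G be a flag-transitive automorphism group of D. If for a block B the setwise stabilizer G_B is isomorphic to the dihedral group D_{2n} with n ≥ 3, then λ is even. -/
open scoped Pointwise

variable {P : Type*} [Fintype P] [DecidableEq P]

/-! ### Auxiliary lemmas -/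

/-- If an involution acts on a finite set without fixed points, the set has even size. -/
lemma aux_even_card_of_fpf {α : Type*} [DecidableEq α] (f : α → α) :
    ∀ S : Finset α, (∀ a ∈ S, f a ∈ S) → (∀ a ∈ S, f (f a) = a) → (∀ a ∈ S, f a ≠ a) →
      Even S.card := by
  intro S
  induction S using Finset.strongInduction with
  | _ S ih =>
    intro hmap hinv hfpf
    rcases S.eq_empty_or_nonempty with rfl | ⟨a, ha⟩
    · simp
    · have hfa : f a ∈ S := hmap a ha
      have hne : f a ≠ a := hfpf a ha
      set S' := (S.erase a).erase (f a) with hS'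
      have hmemS' : ∀ b, b ∈ S' ↔ b ∈ S ∧ b ≠ a ∧ b ≠ f a := by
        intro b
        simp only [hS', Finset.mem_erase]
        tauto
      have hssub : S' ⊂ S := by
        refine Finset.ssubset_iff_of_subset (fun b hb => ((hmemS' b).1 hb).1) |>.2 ?_
        exact ⟨a, ha, fun hcon => (((hmemS' a).1 hcon).2.1 rfl)⟩
      have hmap' : ∀ b ∈ S', f b ∈ S' := by
        intro b hb
        obtain ⟨hbS, hba, hbfa⟩ := (hmemS' b).1 hb
        refine (hmemS' (f b)).2 ⟨hmap b hbS, ?_, ?_⟩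
        · intro h; exact hbfa (by rw [← hinv b hbS, h])
        · intro h
          apply hba
          have := congrArg f h
          rwa [hinv b hbS, hinv a ha] at this
      have hinv' : ∀ b ∈ S', f (f b) = b := fun b hb => hinv b ((hmemS' b).1 hb).1
      have hfpf' : ∀ b ∈ S', f b ≠ b := fun b hb => hfpf b ((hmemS' b).1 hb).1
      have heven := ih S' hssub hmap' hinv' hfpf'
      have hfa' : f a ∈ S.erase a := Finset.mem_erase.2 ⟨hne, hfa⟩
      have hcard : S.card = S'.card + 2 := by
        rw [hS', Finset.card_erase_of_mem hfa', Finset.card_erase_of_mem ha]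
        have h2 : 2 ≤ S.card := Finset.one_lt_card.2 ⟨a, ha, f a, hfa, fun h => hne h.symm⟩
        omega
      rw [hcard]
      exact heven.add even_two

lemma aux_exists_fixed {α : Type*} [DecidableEq α] (f : α → α) (S : Finset α)
    (hmap : ∀ a ∈ S, f a ∈ S) (hinv : ∀ a ∈ S, f (f a) = a) (hodd : Odd S.card) :
    ∃ a ∈ S, f a = a := by
  by_contra h
  push_neg at h
  exact (Nat.not_even_iff_odd.2 hodd) (aux_even_card_of_fpf f S hmap hinv h)

open DihedralGroup in
/-- In a dihedral group action in which every "reflection" `sr c` fixes a point of `D`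
(`D` being a set on which the group acts transitively), a reflection cannot fix two
distinct points of `D`. -/
lemma aux_dihedral_unique_fix {n : ℕ} (hn : 3 ≤ n) {α : Type*}
    (π : DihedralGroup n →* Equiv.Perm α) (D : Finset α)
    (htrans : ∀ x ∈ D, ∀ y ∈ D, ∃ g : DihedralGroup n, π g x = y)
    (hcov : ∀ c : ZMod n, ∃ z ∈ D, π (sr c) z = z)
    {a : ZMod n} {x y : α} (hx : x ∈ D) (hy : y ∈ D)
    (hfx : π (sr a) x = x) (hfy : π (sr a) y = y) : x = y := by
  haveI : NeZero n := ⟨by omega⟩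
  have hrinv : ∀ i : ZMod n, (r i : DihedralGroup n)⁻¹ = r (-i) := fun i => rfl
  have hsrinv : ∀ i : ZMod n, (sr i : DihedralGroup n)⁻¹ = sr i := fun i => rfl
  set K : Subgroup (DihedralGroup n) :=
    Subgroup.comap π (MulAction.stabilizer (Equiv.Perm α) x) with hK
  have hmemK : ∀ g : DihedralGroup n, g ∈ K ↔ π g x = x := by
    intro g
    simp [hK, MulAction.mem_stabilizer_iff, Equiv.Perm.smul_def]
  have hKa : sr a ∈ K := (hmemK _).2 hfx
  have hconj : ∀ g h : DihedralGroup n, π g (π h x) = π h x → h⁻¹ * g * h ∈ K := by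
    intro g h hfix
    refine (hmemK _).2 ?_
    rw [map_mul, map_mul, map_inv]
    calc ((π h)⁻¹ * π g * π h) x = (π h)⁻¹ (π g (π h x)) := rfl
      _ = (π h)⁻¹ (π h x) := by rw [hfix]
      _ = x := Equiv.symm_apply_apply _ _
  set I : AddSubgroup ℤ :=
  { carrier := {m : ℤ | r ((m : ZMod n)) ∈ K}
    zero_mem' := by
      show r ((0 : ℤ) : ZMod n) ∈ K
      rw [Int.cast_zero, ← one_def]
      exact K.one_mem
    add_mem' := by
      intro m₁ m₂ h₁ h₂
      have := K.mul_mem h₁ h₂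
      rw [r_mul_r] at this
      show r (((m₁ + m₂ : ℤ)) : ZMod n) ∈ K
      rwa [Int.cast_add]
    neg_mem' := by
      intro m h
      have h2 := K.inv_mem h
      rw [hrinv] at h2
      show r (((-m : ℤ)) : ZMod n) ∈ K
      rwa [Int.cast_neg] } with hI
  obtain ⟨d, hd⟩ := Int.subgroup_cyclic I
  have hmemI : ∀ m : ℤ, (r ((m : ZMod n)) ∈ K) ↔ d ∣ m := by
    intro m
    have h1 : m ∈ I ↔ m ∈ AddSubgroup.closure ({d} : Set ℤ) := by rw [← hd]
    rw [AddSubgroup.mem_closure_singleton] at h1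
    have h2 : (r ((m : ZMod n)) ∈ K) ↔ m ∈ I := Iff.rfl
    rw [h2, h1]
    constructor
    · rintro ⟨c, hc⟩
      exact ⟨c, by rw [← hc, smul_eq_mul]; ring⟩
    · rintro ⟨c, hc⟩
      exact ⟨c, by rw [smul_eq_mul, hc]; ring⟩
  have hcast : ∀ t : ZMod n, ((t.val : ℤ) : ZMod n) = t := by
    intro t
    push_cast
    rw [ZMod.natCast_val, ZMod.cast_id]
  have hdodd : Odd d := by
    obtain ⟨z, hzD, hz⟩ := hcov (a + 1)
    obtain ⟨g, hg⟩ := htrans x hx z hzD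
    have hgK : g⁻¹ * sr (a + 1) * g ∈ K := hconj _ g (by rw [hg]; exact hz)
    have hdvd : ∃ m : ℤ, Odd m ∧ d ∣ m := by
      rcases g with t | t
      · rw [hrinv] at hgK
        rw [show (r (-t) * sr (a+1) * r t : DihedralGroup n) = sr (a + 1 + t + t) by
          rw [r_mul_sr, sr_mul_r]; ring_nf] at hgK
        have hprod := K.mul_mem hKa hgK
        rw [sr_mul_sr] at hprod
        refine ⟨2 * (t.val : ℤ) + 1, ⟨t.val, by ring⟩, ?_⟩
        rw [← hmemI]
        convert hprod using 2
        push_cast [hcast]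
        ring
      · rw [hsrinv] at hgK
        rw [show (sr t * sr (a+1) * sr t : DihedralGroup n) = sr (t + t - (a + 1)) by
          rw [sr_mul_sr, r_mul_sr]; ring_nf] at hgK
        have hprod := K.mul_mem hKa hgK
        rw [sr_mul_sr] at hprod
        refine ⟨2 * (t.val : ℤ) - 2 * (a.val : ℤ) - 1, ⟨(t.val : ℤ) - (a.val : ℤ) - 1, by ring⟩, ?_⟩
        rw [← hmemI]
        convert hprod using 2
        push_cast [hcast]
        ring
    obtain ⟨m, hmodd, hdm⟩ := hdvd
    rcases Int.even_or_odd d with hde | hdo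
    · exfalso
      obtain ⟨e, he⟩ := hde
      obtain ⟨c, hc⟩ := hdm
      have : Even m := ⟨e * c, by rw [hc, he]; ring⟩
      exact (Int.not_odd_iff_even.2 this) hmodd
    · exact hdo
  have hstar : ∀ s : ZMod n, r (s + s) ∈ K → r s ∈ K := by
    intro s hs
    have h1 : (((2 * (s.val : ℤ)) : ℤ) : ZMod n) = s + s := by push_cast [hcast]; ring
    have h2 : d ∣ 2 * (s.val : ℤ) := (hmemI _).1 (by rw [h1]; exact hs)
    have h3 : d ∣ (s.val : ℤ) := by
      rcases hdodd with ⟨e, he⟩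
      rcases h2 with ⟨c, hc⟩
      rcases Int.even_or_odd c with ⟨c', rfl⟩ | ⟨c', rfl⟩
      · refine ⟨c', ?_⟩
        have h5 : (2 : ℤ) * (s.val : ℤ) = 2 * (d * c') := by rw [hc]; ring
        linarith
      · exfalso
        have h5 : (2 : ℤ) * (s.val : ℤ) = 2 * (d * c') + d := by rw [hc]; ring
        have h6 : Even d := ⟨(s.val : ℤ) - d * c', by linarith⟩
        rw [he] at h6
        rcases h6 with ⟨w, hw⟩
        omega
    have := (hmemI _).2 h3
    rwa [hcast] at this
  obtain ⟨g, hg⟩ := htrans x hx y hy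
  have hgK : g⁻¹ * sr a * g ∈ K := hconj _ g (by rw [hg]; exact hfy)
  rcases g with t | t
  · rw [hrinv] at hgK
    rw [show (r (-t) * sr a * r t : DihedralGroup n) = sr (a + t + t) by
      rw [r_mul_sr, sr_mul_r]; ring_nf] at hgK
    have hprod := K.mul_mem hKa hgK
    rw [sr_mul_sr] at hprod
    have h2 : r (t + t) ∈ K := by
      convert hprod using 2; ring
    have h3 : r t ∈ K := hstar t h2
    rw [← hg]
    exact ((hmemK _).1 h3).symm
  · rw [hsrinv] at hgK
    rw [show (sr t * sr a * sr t : DihedralGroup n) = sr (t + t - a) by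
      rw [sr_mul_sr, r_mul_sr]; ring_nf] at hgK
    have hprod := K.mul_mem hKa hgK
    rw [sr_mul_sr] at hprod
    have h2 : r ((t - a) + (t - a)) ∈ K := by
      convert hprod using 2; ring
    have h3 : r (t - a) ∈ K := hstar (t - a) h2
    have h4 : sr t ∈ K := by
      have := K.mul_mem hKa h3
      rw [sr_mul_r] at this
      convert this using 2; ring
    rw [← hg]
    exact ((hmemK _).1 h4).symm

lemma aux_count1 {𝓑 : Finset (Finset P)} {v k lam : ℕ} (hD : IsDesign 𝓑 v k lam) (x : P) :
    (𝓑.filter (fun C => x ∈ C)).card * (k - 1) = (v - 1) * lam := by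
  classical
  have key := Finset.sum_card_bipartiteAbove_eq_sum_card_bipartiteBelow
    (r := fun (C : Finset P) (y : P) => y ∈ C)
    (s := 𝓑.filter (fun C => x ∈ C)) (t := Finset.univ.erase x)
  have hL : ∀ C ∈ 𝓑.filter (fun C => x ∈ C),
      ((Finset.univ.erase x).bipartiteAbove (fun (C : Finset P) (y : P) => y ∈ C) C).card
        = k - 1 := by
    intro C hC
    rw [Finset.mem_filter] at hC
    have hCe : (Finset.univ.erase x).bipartiteAbove (fun (C : Finset P) (y : P) => y ∈ C) C
        = C.erase x := by
      ext y
      simp [Finset.bipartiteAbove, Finset.mem_erase, and_comm]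
    rw [hCe, Finset.card_erase_of_mem hC.2, hD.blocks_card C hC.1]
  have hR : ∀ y ∈ Finset.univ.erase x,
      ((𝓑.filter (fun C => x ∈ C)).bipartiteBelow (fun (C : Finset P) (y : P) => y ∈ C) y).card
        = lam := by
    intro y hy
    rw [Finset.mem_erase] at hy
    have hCe : (𝓑.filter (fun C => x ∈ C)).bipartiteBelow (fun (C : Finset P) (y : P) => y ∈ C) y
        = 𝓑.filter (fun C => x ∈ C ∧ y ∈ C) := by
      ext C
      simp [Finset.bipartiteBelow, Finset.mem_filter, and_assoc]
    rw [hCe, hD.pair_blocks x y (fun h => hy.1 h.symm)]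
  rw [Finset.sum_congr rfl hL, Finset.sum_congr rfl hR] at key
  simp only [Finset.sum_const, smul_eq_mul] at key
  rw [key, Finset.card_erase_of_mem (Finset.mem_univ x), Finset.card_univ, hD.card_points]

lemma aux_rep {𝓑 : Finset (Finset P)} {v k lam : ℕ} (hD : IsDesign 𝓑 v k lam)
    (hsym : 𝓑.card = v) (x : P) : (𝓑.filter (fun C => x ∈ C)).card = k := by
  classical
  have hv5 : 5 ≤ v := by have := hD.two_lt_k; have := hD.k_lt_v; omega
  have hk1 : 0 < k - 1 := by have := hD.two_lt_k; omega
  have hconst : ∀ y : P, (𝓑.filter (fun C => y ∈ C)).card = (𝓑.filter (fun C => x ∈ C)).card := by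
    intro y
    have h1 := aux_count1 hD x
    have h2 := aux_count1 hD y
    have := h1.trans h2.symm
    exact Nat.eq_of_mul_eq_mul_right hk1 this.symm
  have key := Finset.sum_card_bipartiteAbove_eq_sum_card_bipartiteBelow
    (r := fun (C : Finset P) (y : P) => y ∈ C) (s := 𝓑) (t := (Finset.univ : Finset P))
  have hL : ∀ C ∈ 𝓑,
      ((Finset.univ : Finset P).bipartiteAbove (fun (C : Finset P) (y : P) => y ∈ C) C).card
        = k := by
    intro C hC
    have hCe : (Finset.univ : Finset P).bipartiteAbove (fun (C : Finset P) (y : P) => y ∈ C) C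
        = C := by
      ext y; simp [Finset.bipartiteAbove]
    rw [hCe, hD.blocks_card C hC]
  have hR : ∀ y : P,
      (𝓑.bipartiteBelow (fun (C : Finset P) (y : P) => y ∈ C) y).card
        = (𝓑.filter (fun C => x ∈ C)).card := by
    intro y
    have hCe : 𝓑.bipartiteBelow (fun (C : Finset P) (y : P) => y ∈ C) y
        = 𝓑.filter (fun C => y ∈ C) := by
      ext C; simp [Finset.bipartiteBelow]
    rw [hCe, hconst y]
  rw [Finset.sum_congr rfl hL, Finset.sum_congr rfl (fun y _ => hR y)] at key
  simp only [Finset.sum_const, smul_eq_mul, Finset.card_univ, hD.card_points, hsym] at key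
  exact Nat.eq_of_mul_eq_mul_left (by omega : 0 < v) key.symm

lemma aux_lamv {𝓑 : Finset (Finset P)} {v k lam : ℕ} (hD : IsDesign 𝓑 v k lam)
    (hsym : 𝓑.card = v) : (v - 1) * lam = k * (k - 1) := by
  have hv5 : 5 ≤ v := by have := hD.two_lt_k; have := hD.k_lt_v; omega
  have : Nonempty P := by
    rw [← Fintype.card_pos_iff, hD.card_points]; omega
  obtain ⟨x⟩ := this
  rw [← aux_count1 hD x, aux_rep hD hsym x]

lemma aux_inter {𝓑 : Finset (Finset P)} {v k lam : ℕ} (hD : IsDesign 𝓑 v k lam)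
    (hsym : 𝓑.card = v) {Bb D : Finset P} (hBb : Bb ∈ 𝓑) (hD' : D ∈ 𝓑) (hne : D ≠ Bb) :
    (D ∩ Bb).card = lam := by
  classical
  have hv5 : 5 ≤ v := by have := hD.two_lt_k; have := hD.k_lt_v; omega
  have hk3 : 3 ≤ k := hD.two_lt_k
  have hkBb := hD.blocks_card Bb hBb
  have key1 := Finset.sum_card_bipartiteAbove_eq_sum_card_bipartiteBelow
    (r := fun (C : Finset P) (y : P) => y ∈ C) (s := 𝓑.erase Bb) (t := Bb)
  have hL1 : ∀ C ∈ 𝓑.erase Bb,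
      (Bb.bipartiteAbove (fun (C : Finset P) (y : P) => y ∈ C) C).card = (C ∩ Bb).card := by
    intro C _
    congr 1
    ext y
    simp [Finset.bipartiteAbove, Finset.mem_inter, and_comm]
  have hR1 : ∀ y ∈ Bb,
      ((𝓑.erase Bb).bipartiteBelow (fun (C : Finset P) (y : P) => y ∈ C) y).card = k - 1 := by
    intro y hy
    have hCe : (𝓑.erase Bb).bipartiteBelow (fun (C : Finset P) (y : P) => y ∈ C) y
        = (𝓑.filter (fun C => y ∈ C)).erase Bb := by
      ext C
      simp only [Finset.bipartiteBelow, Finset.mem_filter, Finset.mem_erase]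
      tauto
    rw [hCe, Finset.card_erase_of_mem (Finset.mem_filter.2 ⟨hBb, hy⟩), aux_rep hD hsym y]
  rw [Finset.sum_congr rfl hL1, Finset.sum_congr rfl hR1] at key1
  simp only [Finset.sum_const, smul_eq_mul, hkBb] at key1
  have key2 := Finset.sum_card_bipartiteAbove_eq_sum_card_bipartiteBelow
    (r := fun (C : Finset P) (p : P × P) => p.1 ∈ C ∧ p.2 ∈ C)
    (s := 𝓑.erase Bb) (t := Bb.offDiag)
  have hL2 : ∀ C ∈ 𝓑.erase Bb,
      ((Bb.offDiag).bipartiteAbove (fun (C : Finset P) (p : P × P) => p.1 ∈ C ∧ p.2 ∈ C) C).card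
        = ((C ∩ Bb).offDiag).card := by
    intro C _
    congr 1
    ext p
    simp only [Finset.bipartiteAbove, Finset.mem_filter, Finset.mem_offDiag, Finset.mem_inter]
    tauto
  have hR2 : ∀ p ∈ Bb.offDiag,
      ((𝓑.erase Bb).bipartiteBelow (fun (C : Finset P) (p : P × P) => p.1 ∈ C ∧ p.2 ∈ C) p).card
        = lam - 1 := by
    intro p hp
    rw [Finset.mem_offDiag] at hp
    have hCe : (𝓑.erase Bb).bipartiteBelow (fun (C : Finset P) (p : P × P) => p.1 ∈ C ∧ p.2 ∈ C) p
        = (𝓑.filter (fun C => p.1 ∈ C ∧ p.2 ∈ C)).erase Bb := by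
      ext C
      simp only [Finset.bipartiteBelow, Finset.mem_filter, Finset.mem_erase]
      tauto
    rw [hCe, Finset.card_erase_of_mem (Finset.mem_filter.2 ⟨hBb, hp.1, hp.2.1⟩),
      hD.pair_blocks p.1 p.2 hp.2.2]
  rw [Finset.sum_congr rfl hL2, Finset.sum_congr rfl hR2] at key2
  simp only [Finset.sum_const, smul_eq_mul, Finset.offDiag_card, hkBb] at key2
  have hcasterase : ((𝓑.erase Bb).card : ℤ) = (v : ℤ) - 1 := by
    rw [Finset.card_erase_of_mem hBb, hsym]
    have : (1 : ℕ) ≤ v := by omega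
    push_cast [Nat.cast_sub this]
    ring
  set m : Finset P → ℤ := fun C => ((C ∩ Bb).card : ℤ) with hm
  have hsq : ∀ c : ℕ, (((c * c - c : ℕ) : ℤ)) = (c : ℤ) * (c : ℤ) - (c : ℤ) := by
    intro c
    rcases Nat.eq_zero_or_pos c with rfl | h
    · simp
    · have hle : c ≤ c * c := Nat.le_mul_of_pos_left c h
      rw [Nat.cast_sub hle]
      push_cast
      ring
  have hc1 : (∑ C ∈ 𝓑.erase Bb, m C) = (k : ℤ) * ((k : ℤ) - 1) := by
    have h1 : (1 : ℕ) ≤ k := by omega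
    calc (∑ C ∈ 𝓑.erase Bb, m C)
        = ((∑ C ∈ 𝓑.erase Bb, (C ∩ Bb).card : ℕ) : ℤ) := (Nat.cast_sum _ _).symm
      _ = ((k * (k - 1) : ℕ) : ℤ) := by rw [key1]
      _ = (k : ℤ) * ((k : ℤ) - 1) := by rw [Nat.cast_mul, Nat.cast_sub h1]; push_cast; ring
  have hc2 : (∑ C ∈ 𝓑.erase Bb, (m C * m C - m C))
      = ((k : ℤ) * (k : ℤ) - k) * ((lam : ℤ) - 1) := by
    have h1 : (1 : ℕ) ≤ lam := hD.lam_pos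
    have h2 : k ≤ k * k := Nat.le_mul_of_pos_left k (by omega)
    have e1 : ∀ C ∈ 𝓑.erase Bb, (m C * m C - m C)
        = ((((C ∩ Bb).card * (C ∩ Bb).card - (C ∩ Bb).card : ℕ)) : ℤ) :=
      fun C _ => (hsq _).symm
    rw [Finset.sum_congr rfl e1, ← Nat.cast_sum, key2, Nat.cast_mul, Nat.cast_sub h2,
      Nat.cast_sub h1]
    push_cast
    ring
  have hlv : ((v : ℤ) - 1) * (lam : ℤ) = (k : ℤ) * ((k : ℤ) - 1) := by
    have h1 : (1 : ℕ) ≤ v := by omega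
    have h2 : (1 : ℕ) ≤ k := by omega
    calc ((v : ℤ) - 1) * (lam : ℤ) = (((v - 1) * lam : ℕ) : ℤ) := by
          rw [Nat.cast_mul, Nat.cast_sub h1]; push_cast; ring
      _ = ((k * (k - 1) : ℕ) : ℤ) := by rw [aux_lamv hD hsym]
      _ = (k : ℤ) * ((k : ℤ) - 1) := by rw [Nat.cast_mul, Nat.cast_sub h2]; push_cast; ring
  have hvar : (∑ C ∈ 𝓑.erase Bb, (m C - (lam : ℤ)) ^ 2) = 0 := by
    have hexp : ∀ C ∈ 𝓑.erase Bb, (m C - (lam : ℤ)) ^ 2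
        = (m C * m C - m C) - (2 * (lam : ℤ) - 1) * m C + (lam : ℤ) * (lam : ℤ) := by
      intro C _
      ring
    rw [Finset.sum_congr rfl hexp]
    rw [Finset.sum_add_distrib, Finset.sum_sub_distrib, ← Finset.mul_sum, Finset.sum_const,
      hc1, hc2, nsmul_eq_mul, hcasterase]
    linear_combination (lam : ℤ) * hlv
  have hzero := (Finset.sum_eq_zero_iff_of_nonneg (fun C _ => sq_nonneg (m C - (lam : ℤ)))).1 hvar
  have hDmem : D ∈ 𝓑.erase Bb := Finset.mem_erase.2 ⟨hne, hD'⟩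
  have := hzero D hDmem
  have hmD : m D = (lam : ℤ) := by nlinarith [this]
  have : ((D ∩ Bb).card : ℤ) = (lam : ℤ) := hmD
  exact_mod_cast this

/-- **Lemma 6.6.** Let `G` be a flag-transitive automorphism group of a symmetric design
with `λ > 1`. If `G_B ≅ D_{2n}` with `n ≥ 3`, then `λ` is even. -/
theorem stmt_18 (𝓑 : Finset (Finset P)) (v k lam n : ℕ)
    (hD : IsDesign 𝓑 v k lam) (hsym : 𝓑.card = v) (hlam : 1 < lam)
    (G : Subgroup (Equiv.Perm P)) (hAut : IsAutGroup G 𝓑)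
    (hflag : IsFlagTransitive G 𝓑) (hn : 3 ≤ n)
    (B : Finset P) (hB : B ∈ 𝓑)
    (hdih : Nonempty (MulAction.stabilizer G B ≃* DihedralGroup n)) :
    Even lam := by
  classical
  by_contra hEven
  have hOdd : Odd lam := Nat.not_even_iff_odd.1 hEven
  obtain ⟨φ⟩ := hdih
  have hk3 : 3 ≤ k := hD.two_lt_k
  have hkv : k + 1 < v := by have := hD.k_lt_v; have := hD.two_lt_k; omega
  have hlam3 : 3 ≤ lam := by rcases hOdd with ⟨t, ht⟩; omega
  haveI : NeZero n := ⟨by omega⟩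

  -- basic facts about the pointwise action on finsets
  have hsmul_mem : ∀ (g : Equiv.Perm P) (C : Finset P) (x : P), x ∈ C → g x ∈ g • C := by
    intro g C x hx
    rw [Finset.mem_smul_finset]
    exact ⟨x, hx, rfl⟩
  have happly2 : ∀ g : Equiv.Perm P, g * g = 1 → ∀ u : P, g (g u) = u := by
    intro g hg2 u
    have : (g * g) u = (1 : Equiv.Perm P) u := by rw [hg2]
    simpa [Equiv.Perm.mul_apply] using this
  have hsmul2 : ∀ g : Equiv.Perm P, g * g = 1 → ∀ C : Finset P, g • (g • C) = C := by
    intro g hg2 C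
    rw [smul_smul, hg2, one_smul]
  -- P1 : an involution stabilising a pair `{x, y}` fixes a block through `x` and `y`
  have pFix : ∀ g : Equiv.Perm P, g ∈ G → g * g = 1 → ∀ x y : P, x ≠ y →
      ((g x = x ∧ g y = y) ∨ (g x = y ∧ g y = x)) →
      ∃ E ∈ 𝓑, x ∈ E ∧ y ∈ E ∧ g • E = E := by
    intro g hg hg2 x y hxy hcase
    have hmap : ∀ C ∈ 𝓑.filter (fun C => x ∈ C ∧ y ∈ C),
        g • C ∈ 𝓑.filter (fun C => x ∈ C ∧ y ∈ C) := by
      intro C hC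
      rw [Finset.mem_filter] at hC ⊢
      obtain ⟨hC1, hxC, hyC⟩ := hC
      refine ⟨hAut g hg C hC1, ?_, ?_⟩
      · rcases hcase with ⟨h1, h2⟩ | ⟨h1, h2⟩
        · have := hsmul_mem g C x hxC; rwa [h1] at this
        · have := hsmul_mem g C y hyC; rwa [h2] at this
      · rcases hcase with ⟨h1, h2⟩ | ⟨h1, h2⟩
        · have := hsmul_mem g C y hyC; rwa [h2] at this
        · have := hsmul_mem g C x hxC; rwa [h1] at this
    have hodd : Odd (𝓑.filter (fun C => x ∈ C ∧ y ∈ C)).card := by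
      rw [hD.pair_blocks x y hxy]; exact hOdd
    obtain ⟨E, hE, hgE⟩ := aux_exists_fixed (fun C => g • C) _ hmap
      (fun C _ => hsmul2 g hg2 C) hodd
    rw [Finset.mem_filter] at hE
    exact ⟨E, hE.1, hE.2.1, hE.2.2, hgE⟩
  -- P2 : an involution fixing two distinct blocks fixes a common point of them
  have pInt : ∀ g : Equiv.Perm P, g ∈ G → g * g = 1 → ∀ D E : Finset P, D ∈ 𝓑 → E ∈ 𝓑 →
      D ≠ E → g • D = D → g • E = E → ∃ z, z ∈ D ∧ z ∈ E ∧ g z = z := by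
    intro g hg hg2 D E hDm hEm hne hgD hgE
    have hmap : ∀ z ∈ D ∩ E, g z ∈ D ∩ E := by
      intro z hz
      rw [Finset.mem_inter] at hz ⊢
      constructor
      · have := hsmul_mem g D z hz.1; rwa [hgD] at this
      · have := hsmul_mem g E z hz.2; rwa [hgE] at this
    have hodd : Odd ((D ∩ E).card) := by
      rw [aux_inter hD hsym hEm hDm hne]; exact hOdd
    obtain ⟨z, hz, hgz⟩ := aux_exists_fixed (fun z => g z) _ hmap
      (fun z _ => happly2 g hg2 z) hodd
    rw [Finset.mem_inter] at hz
    exact ⟨z, hz.1, hz.2, hgz⟩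
  -- P2' : an involution moving a block fixes a point of it
  have pInt' : ∀ g : Equiv.Perm P, g ∈ G → g * g = 1 → ∀ D : Finset P, D ∈ 𝓑 →
      g • D ≠ D → ∃ z ∈ D, g z = z := by
    intro g hg hg2 D hDm hne
    have hgDm : g • D ∈ 𝓑 := hAut g hg D hDm
    have hmap : ∀ z ∈ D ∩ g • D, g z ∈ D ∩ g • D := by
      intro z hz
      rw [Finset.mem_inter] at hz ⊢
      constructor
      · have := hsmul_mem g (g • D) z hz.2; rwa [hsmul2 g hg2 D] at this
      · exact hsmul_mem g D z hz.1
    have hodd : Odd ((D ∩ g • D).card) := by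
      rw [aux_inter hD hsym hgDm hDm (fun h => hne h.symm)]; exact hOdd
    obtain ⟨z, hz, hgz⟩ := aux_exists_fixed (fun z => g z) _ hmap
      (fun z _ => happly2 g hg2 z) hodd
    rw [Finset.mem_inter] at hz
    exact ⟨z, hz.1, hgz⟩
  -- S2 : an involution fixing a block fixes one of its points
  have hfixblk : ∀ g : Equiv.Perm P, g ∈ G → g * g = 1 → ∀ D ∈ 𝓑, g • D = D →
      ∃ x ∈ D, g x = x := by
    intro g hg hg2 D hDm hgD
    by_contra hno
    push_neg at hno
    have huniq : ∀ E ∈ 𝓑, g • E = E → E = D := by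
      intro E hE hgE
      by_contra hne
      obtain ⟨z, hzD, _, hgz⟩ := pInt g hg hg2 D E hDm hE (fun h => hne h.symm) hgD hgE
      exact hno z hzD hgz
    have hcover : ∀ u : P, g u ≠ u → u ∈ D := by
      intro u hu
      obtain ⟨E, hE, huE, _, hgE⟩ := pFix g hg hg2 u (g u) (fun h => hu h.symm)
        (Or.inr ⟨rfl, happly2 g hg2 u⟩)
      rwa [huniq E hE hgE] at huE
    have hone : ∀ x y : P, g x = x → g y = y → x = y := by
      intro x y hx hy
      by_contra hxy
      obtain ⟨E, hE, hxE, _, hgE⟩ := pFix g hg hg2 x y hxy (Or.inl ⟨hx, hy⟩)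
      rw [huniq E hE hgE] at hxE
      exact hno x hxE hx
    have hDk := hD.blocks_card D hDm
    by_cases hex : ∃ x₀ : P, g x₀ = x₀
    · obtain ⟨x₀, hx₀⟩ := hex
      have hsub : (Finset.univ : Finset P) ⊆ insert x₀ D := by
        intro u _
        by_cases hgu : g u = u
        · rw [hone u x₀ hgu hx₀]; exact Finset.mem_insert_self _ _
        · exact Finset.mem_insert_of_mem (hcover u hgu)
      have h1 := Finset.card_le_card hsub
      have h2 := Finset.card_insert_le x₀ D
      rw [Finset.card_univ, hD.card_points] at h1
      omega
    · push_neg at hex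
      have hsub : (Finset.univ : Finset P) ⊆ D := fun u _ => hcover u (hex u)
      have h1 := Finset.card_le_card hsub
      rw [Finset.card_univ, hD.card_points] at h1
      omega
  -- an involution with a fixed point has a second fixed point
  have hmany : ∀ g : Equiv.Perm P, g ∈ G → g * g = 1 → ∀ x₀ : P, g x₀ = x₀ →
      ∃ x₁ : P, g x₁ = x₁ ∧ x₁ ≠ x₀ := by
    intro g hg hg2 x₀ hx₀
    by_contra hno
    push_neg at hno
    have hall : ∀ C ∈ 𝓑, x₀ ∈ C := by
      intro C hC
      by_cases hgC : g • C = C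
      · obtain ⟨z, hz, hgz⟩ := hfixblk g hg hg2 C hC hgC
        rwa [← hno z hgz]
      · obtain ⟨z, hz, hgz⟩ := pInt' g hg hg2 C hC hgC
        rwa [← hno z hgz]
    have hfil : 𝓑.filter (fun C => x₀ ∈ C) = 𝓑 := Finset.filter_true_of_mem hall
    have hrx := aux_rep hD hsym x₀
    rw [hfil, hsym] at hrx
    omega
  -- block nonemptiness
  have hBne : ∀ D ∈ 𝓑, D.Nonempty := by
    intro D hDm
    rw [← Finset.card_pos, hD.blocks_card D hDm]; omega
  -- for every block `D`, a group morphism onto the stabiliser of `D`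
  have hStabIso : ∀ D ∈ 𝓑, ∃ π : DihedralGroup n →* Equiv.Perm P,
      Function.Injective ⇑π ∧
      (∀ u : DihedralGroup n, π u ∈ G ∧ π u • D = D) ∧
      (∀ h : Equiv.Perm P, h ∈ G → h • D = D → ∃ u, π u = h) := by
    intro D hDm
    obtain ⟨x₁, hx₁⟩ := hBne B hB
    obtain ⟨x₂, hx₂⟩ := hBne D hDm
    obtain ⟨g, hgG, hgx, hgB⟩ := hflag B hB D hDm x₁ hx₁ x₂ hx₂
    have horb : MulAction.orbitRel (↥G) (Finset P) D B := by
      rw [MulAction.orbitRel_apply, MulAction.mem_orbit_iff]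
      refine ⟨⟨g, hgG⟩, ?_⟩
      show g • B = D
      exact hgB
    set ψ : MulAction.stabilizer (↥G) D ≃* DihedralGroup n :=
      (MulAction.stabilizerEquivStabilizerOfOrbitRel horb).trans φ with hψ
    refine ⟨(G.subtype.comp ((MulAction.stabilizer (↥G) D).subtype)).comp ψ.symm.toMonoidHom,
      ?_, ?_, ?_⟩
    · exact G.subtype_injective.comp
        ((MulAction.stabilizer (↥G) D).subtype_injective.comp (MulEquiv.injective _))
    · intro u
      constructor
      · exact SetLike.coe_mem ((ψ.symm u : MulAction.stabilizer (↥G) D) : ↥G)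
      · exact (ψ.symm u : MulAction.stabilizer (↥G) D).2
    · intro h hhG hhD
      refine ⟨ψ ⟨⟨h, hhG⟩, ?_⟩, ?_⟩
      · show (⟨h, hhG⟩ : ↥G) • D = D
        exact hhD
      · simp only [MonoidHom.comp_apply, MulEquiv.coe_toMonoidHom, MulEquiv.symm_apply_apply]
        rfl

  -- squares of reflections are trivial
  have hsr2 : ∀ c : ZMod n, (DihedralGroup.sr c) * (DihedralGroup.sr c) = (1 : DihedralGroup n) := by
    intro c
    rw [DihedralGroup.sr_mul_sr, sub_self]
    exact DihedralGroup.one_def.symm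
  -- solutions of `t + t = 0` in `ZMod n`
  have hzmod : ∀ t : ZMod n, t + t = 0 → t = 0 ∨ (n % 2 = 0 ∧ t = ((n / 2 : ℕ) : ZMod n)) := by
    intro t ht
    have hv := ZMod.val_lt t
    have hcastt : ((t.val : ℕ) : ZMod n) = t := by rw [ZMod.natCast_val, ZMod.cast_id]
    have h0 : ((t.val + t.val : ℕ) : ZMod n) = 0 := by
      rw [Nat.cast_add, hcastt, ht]
    obtain ⟨c, hc⟩ := (ZMod.natCast_eq_zero_iff _ _).1 h0
    have hc1 : c = 0 ∨ c = 1 := by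
      by_contra hcon
      have hcon2 : 2 ≤ c := by omega
      have h5 : n * 2 ≤ n * c := Nat.mul_le_mul_left n hcon2
      have h7 : n * 2 ≤ t.val + t.val := hc ▸ h5
      omega
    rcases hc1 with rfl | rfl
    · left
      rw [Nat.mul_zero] at hc
      have : t.val = 0 := by omega
      rw [← hcastt, this, Nat.cast_zero]
    · right
      rw [Nat.mul_one] at hc
      have h1 : n % 2 = 0 := by omega
      have h2 : t.val = n / 2 := by omega
      exact ⟨h1, by rw [← hcastt, h2]⟩
  -- preparation for applying `aux_dihedral_unique_fix` to a block `D`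
  have hKLprep : ∀ D ∈ 𝓑, ∀ π : DihedralGroup n →* Equiv.Perm P,
      (∀ u : DihedralGroup n, π u ∈ G ∧ π u • D = D) →
      (∀ h : Equiv.Perm P, h ∈ G → h • D = D → ∃ u, π u = h) →
      (∀ x ∈ D, ∀ y ∈ D, ∃ w : DihedralGroup n, π w x = y) ∧
      (∀ c : ZMod n, ∃ z' ∈ D, π (DihedralGroup.sr c) z' = z') := by
    intro D hDm π hmem hsurj
    constructor
    · intro x hx y hy
      obtain ⟨g, hgG, hgx, hgE⟩ := hflag D hDm D hDm x hx y hy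
      obtain ⟨w, hw⟩ := hsurj g hgG hgE
      exact ⟨w, by rw [hw]; exact hgx⟩
    · intro c
      have h1 : π (DihedralGroup.sr c) ∈ G := (hmem _).1
      have h2 : π (DihedralGroup.sr c) • D = D := (hmem _).2
      have h3 : π (DihedralGroup.sr c) * π (DihedralGroup.sr c) = 1 := by
        rw [← map_mul, hsr2, map_one]
      exact hfixblk _ h1 h3 D hDm h2
  obtain ⟨πB, hπBinj, hπBmem, hπBsurj⟩ := hStabIso B hB
  rcases Nat.even_or_odd n with hneven | hnodd
  · -- `n` even : use the central involution
    have hhalf : ((n / 2 : ℕ) : ZMod n) + ((n / 2 : ℕ) : ZMod n) = 0 := by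
      rw [← Nat.cast_add]
      have he : n / 2 + n / 2 = n := by rcases hneven with ⟨w, hw⟩; omega
      rw [he, ZMod.natCast_self]
    have hr0 : (DihedralGroup.r (0 : ZMod n) : DihedralGroup n) = 1 := DihedralGroup.one_def.symm
    set z := πB (DihedralGroup.r ((n / 2 : ℕ) : ZMod n)) with hz
    have hzG : z ∈ G := (hπBmem _).1
    have hzB : z • B = B := (hπBmem _).2
    have hz2 : z * z = 1 := by
      rw [hz, ← map_mul, DihedralGroup.r_mul_r, hhalf, hr0, map_one]
    have hzne : z ≠ 1 := by
      intro h
      have h2 : (DihedralGroup.r ((n / 2 : ℕ) : ZMod n) : DihedralGroup n) = 1 :=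
        hπBinj (by rw [← hz, h, map_one])
      rw [← hr0, DihedralGroup.r.injEq] at h2
      have h1 : 0 < n / 2 := by omega
      have h3 : n / 2 < n := by omega
      have := (ZMod.natCast_eq_zero_iff _ _).1 h2
      have := Nat.le_of_dvd h1 this
      omega
    have hcent : ∀ u : DihedralGroup n, DihedralGroup.r ((n / 2 : ℕ) : ZMod n) * u
        = u * DihedralGroup.r ((n / 2 : ℕ) : ZMod n) := by
      intro u
      have hneg : -((n / 2 : ℕ) : ZMod n) = ((n / 2 : ℕ) : ZMod n) :=
        neg_eq_of_add_eq_zero_right hhalf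
      rcases u with t | t
      · rw [DihedralGroup.r_mul_r, DihedralGroup.r_mul_r, add_comm]
      · rw [DihedralGroup.r_mul_sr, DihedralGroup.sr_mul_r, sub_eq_add_neg, hneg]
    -- `z` fixes `B` pointwise
    have hzBpt : ∀ x ∈ B, z x = x := by
      obtain ⟨x₀, hx₀B, hx₀⟩ := hfixblk z hzG hz2 B hB hzB
      intro x hx
      obtain ⟨g, hgG, hgx, hgB⟩ := hflag B hB B hB x₀ hx₀B x hx
      obtain ⟨w, hw⟩ := hπBsurj g hgG hgB
      have hcomm : z * g = g * z := by
        rw [hz, ← hw, ← map_mul, ← map_mul, hcent w]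
      have hgx' : g x₀ = x := hgx
      calc z x = z (g x₀) := by rw [hgx']
        _ = (z * g) x₀ := rfl
        _ = (g * z) x₀ := by rw [hcomm]
        _ = g (z x₀) := rfl
        _ = g x₀ := by rw [hx₀]
        _ = x := hgx'
    have hzy : ∃ y : P, z y ≠ y := by
      by_contra hall
      push_neg at hall
      exact hzne (Equiv.ext fun y => by simpa using hall y)
    obtain ⟨y, hy⟩ := hzy
    have hyB : y ∉ B := fun h => hy (hzBpt y h)
    obtain ⟨Dm, hDm, hyD, _, hzD⟩ := pFix z hzG hz2 y (z y) (fun h => hy h.symm)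
      (Or.inr ⟨rfl, happly2 z hz2 y⟩)
    have hDB : Dm ≠ B := fun h => hyB (h ▸ hyD)
    obtain ⟨πD, hπDinj, hπDmem, hπDsurj⟩ := hStabIso Dm hDm
    obtain ⟨htransD, hcovD⟩ := hKLprep Dm hDm πD hπDmem hπDsurj
    obtain ⟨u, hu⟩ := hπDsurj z hzG hzD
    have hu2 : u * u = 1 := hπDinj (by rw [map_mul, hu, hz2, map_one])
    have hune : u ≠ 1 := fun h => hzne (by rw [← hu, h, map_one])
    rcases u with t | a
    · rw [DihedralGroup.r_mul_r, ← hr0, DihedralGroup.r.injEq] at hu2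
      rcases hzmod t hu2 with rfl | ⟨-, rfl⟩
      · exact hune hr0
      · -- `z` is the central involution of the stabiliser of `Dm` too, so fixes `Dm` pointwise
        have hzDpt : ∀ x ∈ Dm, z x = x := by
          obtain ⟨x₀, hx₀D, hx₀⟩ := hfixblk z hzG hz2 Dm hDm hzD
          intro x hx
          obtain ⟨g, hgG, hgx, hgB'⟩ := hflag Dm hDm Dm hDm x₀ hx₀D x hx
          obtain ⟨w, hw⟩ := hπDsurj g hgG hgB'
          have hcomm : z * g = g * z := by
            rw [← hu, ← hw, ← map_mul, ← map_mul, hcent w]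
          have hgx' : g x₀ = x := hgx
          calc z x = z (g x₀) := by rw [hgx']
            _ = (z * g) x₀ := rfl
            _ = (g * z) x₀ := by rw [hcomm]
            _ = g (z x₀) := rfl
            _ = g x₀ := by rw [hx₀]
            _ = x := hgx'
        exact hy (hzDpt y hyD)
    · -- `z` acts on `Dm` as a reflection but fixes the `lam ≥ 3` points of `B ∩ Dm`
      have hlcard : (B ∩ Dm).card = lam := aux_inter hD hsym hDm hB (fun h => hDB h.symm)
      have h2pts : ∃ p ∈ B ∩ Dm, ∃ q ∈ B ∩ Dm, p ≠ q := by
        rw [← Finset.one_lt_card, hlcard]; omega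
      obtain ⟨p, hp, q, hq, hpq⟩ := h2pts
      rw [Finset.mem_inter] at hp hq
      have hzp : z p = p := hzBpt p hp.1
      have hzq : z q = q := hzBpt q hq.1
      exact hpq (aux_dihedral_unique_fix hn πD Dm htransD hcovD hp.2 hq.2
        (by rw [hu]; exact hzp) (by rw [hu]; exact hzq))
  · -- `n` odd : use any reflection
    set τ := πB (DihedralGroup.sr 0) with hτ
    have hτG : τ ∈ G := (hπBmem _).1
    have hτB : τ • B = B := (hπBmem _).2
    have hτ2 : τ * τ = 1 := by rw [hτ, ← map_mul, hsr2, map_one]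
    obtain ⟨x₀, hx₀B, hx₀⟩ := hfixblk τ hτG hτ2 B hB hτB
    obtain ⟨x₁, hx₁, hx₁ne⟩ := hmany τ hτG hτ2 x₀ hx₀
    obtain ⟨E, hEm, hx₀E, hx₁E, hτE⟩ := pFix τ hτG hτ2 x₀ x₁ (Ne.symm hx₁ne)
      (Or.inl ⟨hx₀, hx₁⟩)
    obtain ⟨πE, hπEinj, hπEmem, hπEsurj⟩ := hStabIso E hEm
    obtain ⟨htransE, hcovE⟩ := hKLprep E hEm πE hπEmem hπEsurj
    obtain ⟨u, hu⟩ := hπEsurj τ hτG hτE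
    have hτne : τ ≠ 1 := by
      intro h
      have h2 : (DihedralGroup.sr (0 : ZMod n) : DihedralGroup n) = 1 :=
        hπBinj (by rw [← hτ, h, map_one])
      rw [DihedralGroup.one_def] at h2
      exact absurd h2 (by simp [DihedralGroup.one_def, -DihedralGroup.r_zero])
    have hu2 : u * u = 1 := hπEinj (by rw [map_mul, hu, hτ2, map_one])
    have hune : u ≠ 1 := fun h => hτne (by rw [← hu, h, map_one])
    have hr0 : (DihedralGroup.r (0 : ZMod n) : DihedralGroup n) = 1 := DihedralGroup.one_def.symm
    rcases u with t | a
    · rw [DihedralGroup.r_mul_r, ← hr0, DihedralGroup.r.injEq] at hu2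
      rcases hzmod t hu2 with rfl | ⟨hpar, -⟩
      · exact hune hr0
      · rcases hnodd with ⟨w, hw⟩; omega
    · exact (Ne.symm hx₁ne) (aux_dihedral_unique_fix hn πE E htransE hcovE hx₀E hx₁E
        (by rw [hu]; exact hx₀) (by rw [hu]; exact hx₁))
end
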